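/- arXiv:1707.01569 — 3 statements merged into one kernel-verified Lean document; each statement's English description precedes it below -/
import Mathlib

section
/- Let f = h + conj(g) be a sense-preserving harmonic mapping in D normalized by h(0)=0, h'(0)=1, g(0)=0, with ||P_f|| ≤ λ and b₁ = g'(0). Then for every z in D, (1-|b₁|²)·((1-|z|)/(1+|z|))^λ ≤ J_f(z) ≤ (1-|b₁|²)·((1+|z|)/(1-|z|))^λ, where J_f = |h'|² - |g'|². -/
open Complex Metric

/-- Pre-Schwarzian derivative of an analytic function. -/
noncomputable def pd (F : ℂ → ℂ) (z : ℂ) : ℂ := deriv (deriv F) z / deriv F z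

/-- Dilatation of the harmonic mapping `h + conj g`. -/
noncomputable def dil (h g : ℂ → ℂ) (z : ℂ) : ℂ := deriv g z / deriv h z

/-- Pre-Schwarzian derivative of the harmonic mapping `h + conj g`. -/
noncomputable def PH (h g : ℂ → ℂ) (z : ℂ) : ℂ :=
  pd h z - (starRingEnd ℂ) (dil h g z) * deriv (dil h g) z / ((1 - ‖dil h g z‖ ^ 2 : ℝ) : ℂ)

/-- Pre-Schwarzian norm. -/
noncomputable def pnorm (P : ℂ → ℂ) : ℝ :=
  ⨆ z : Metric.ball (0 : ℂ) 1, (1 - ‖(z : ℂ)‖ ^ 2) * ‖P (z : ℂ)‖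

/-- The range whose boundedness expresses finiteness of the pre-Schwarzian norm. -/
def pbdd (P : ℂ → ℂ) : Prop :=
  BddAbove (Set.range fun z : Metric.ball (0 : ℂ) 1 => (1 - ‖(z : ℂ)‖ ^ 2) * ‖P (z : ℂ)‖)

/-- `h + conj g` is a sense-preserving harmonic mapping in the unit disk. -/
def SPH (h g : ℂ → ℂ) : Prop :=
  DifferentiableOn ℂ h (Metric.ball (0 : ℂ) 1) ∧
  DifferentiableOn ℂ g (Metric.ball (0 : ℂ) 1) ∧ g 0 = 0 ∧
  ∀ z ∈ Metric.ball (0 : ℂ) 1, ‖deriv g z‖ < ‖deriv h z‖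

lemma aux15 (h g : ℂ → ℂ) (hf : SPH h g) (w : ℂ) (hw : w ∈ Metric.ball (0:ℂ) 1) :
    deriv h w ≠ 0 ∧ (0:ℝ) < ‖deriv h w‖^2 - ‖deriv g w‖^2 ∧
    HasDerivAt (deriv h) (deriv (deriv h) w) w ∧ HasDerivAt (deriv g) (deriv (deriv g) w) w ∧
    (starRingEnd ℂ) (deriv h w) * deriv (deriv h) w
      - (starRingEnd ℂ) (deriv g w) * deriv (deriv g) w
      = ((‖deriv h w‖^2 - ‖deriv g w‖^2 : ℝ) : ℂ) * PH h g w := by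
  obtain ⟨hh, hg, -, hsp⟩ := hf
  have hlt := hsp w hw
  have ha : deriv h w ≠ 0 := by
    intro h0; rw [h0, norm_zero] at hlt; exact (norm_nonneg _).not_gt hlt
  have hJ : (0:ℝ) < ‖deriv h w‖^2 - ‖deriv g w‖^2 := by nlinarith [norm_nonneg (deriv g w)]
  have hAh : HasDerivAt (deriv h) (deriv (deriv h) w) w :=
    (((hh.analyticOnNhd isOpen_ball).deriv w hw).differentiableAt).hasDerivAt
  have hAg : HasDerivAt (deriv g) (deriv (deriv g) w) w :=
    (((hg.analyticOnNhd isOpen_ball).deriv w hw).differentiableAt).hasDerivAt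
  refine ⟨ha, hJ, hAh, hAg, ?_⟩
  set a := deriv h w with ha'
  set b := deriv g w with hb'
  set A := deriv (deriv h) w with hA'
  set B := deriv (deriv g) w with hB'
  have hdil : deriv (dil h g) w = (B * a - b * A) / a ^ 2 := by
    have : HasDerivAt (dil h g) ((B * a - b * A) / a ^ 2) w := hAg.div hAh ha
    exact this.deriv
  have hca : (starRingEnd ℂ) a ≠ 0 := by simpa using ha
  have hna : (‖a‖^2 : ℂ) = a * (starRingEnd ℂ) a := (Complex.mul_conj' a).symm
  have hnb : (‖b‖^2 : ℂ) = b * (starRingEnd ℂ) b := (Complex.mul_conj' b).symm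
  have hna0 : (‖a‖:ℝ) ≠ 0 := by simpa using ha
  have hJ0 : ((‖a‖^2 - ‖b‖^2 : ℝ) : ℂ) ≠ 0 := by
    exact_mod_cast hJ.ne'
  have hdw : dil h g w = b / a := rfl
  have hnd : ‖b / a‖^2 = ‖b‖^2 / ‖a‖^2 := by
    rw [norm_div]; ring
  have hJc : ((‖a‖^2 - ‖b‖^2 : ℝ) : ℂ) = a * (starRingEnd ℂ) a - b * (starRingEnd ℂ) b := by
    push_cast [← hna, ← hnb]; ring
  have hne : a * (starRingEnd ℂ) a - b * (starRingEnd ℂ) b ≠ 0 := hJc ▸ hJ0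
  have e0 : (1 - ‖b/a‖^2 : ℝ) = (‖a‖^2 - ‖b‖^2) / (‖a‖^2) := by
    have h2 : (‖a‖:ℝ)^2 ≠ 0 := pow_ne_zero 2 hna0
    rw [hnd, eq_div_iff h2, sub_mul, div_mul_cancel₀ _ h2, one_mul]
  rw [PH, pd, hdil, hdw, ← ha', ← hA', map_div₀, e0]
  have e1 : (((‖a‖^2 - ‖b‖^2) / (‖a‖^2) : ℝ) : ℂ)
      = (a * (starRingEnd ℂ) a - b * (starRingEnd ℂ) b) / (a * (starRingEnd ℂ) a) := by
    push_cast [← hna, ← hnb]; ring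
  rw [e1, hJc]
  field_simp [ha, hca, hne, (by rwa [mul_comm a, mul_comm b] at hne : (starRingEnd ℂ) a * a - (starRingEnd ℂ) b * b ≠ 0)]
  ring

lemma sq_deriv15 {F : ℝ → ℂ} {F' : ℂ} {t : ℝ} (hF : HasDerivAt F F' t) :
    HasDerivAt (fun s => ‖F s‖^2) (2 * ((starRingEnd ℂ) (F t) * F').re) t := by
  have h1 : HasDerivAt (fun s => F s * (starRingEnd ℂ) (F s))
      (F' * (starRingEnd ℂ) (F t) + F t * (starRingEnd ℂ) F') t := hF.mul hF.star
  have h2 := Complex.reCLM.hasFDerivAt.comp_hasDerivAt t h1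
  have h3 : (fun s => ‖F s‖^2) = (⇑Complex.reCLM ∘ fun s => F s * (starRingEnd ℂ) (F s)) := by
    funext s; simp [Function.comp, Complex.mul_conj', ← Complex.ofReal_pow]
  rw [h3]
  refine h2.congr_deriv ?_
  simp [Complex.add_re, Complex.mul_re, Complex.conj_re, Complex.conj_im]
  ring

theorem stmt15 (h g : ℂ → ℂ) (hf : SPH h g) (lam : ℝ)
    (h0 : h 0 = 0) (h1 : deriv h 0 = 1)
    (hnorm : ∀ z ∈ Metric.ball (0 : ℂ) 1, (1 - ‖z‖ ^ 2) * ‖PH h g z‖ ≤ lam) :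
    ∀ z ∈ Metric.ball (0 : ℂ) 1,
      (1 - ‖deriv g 0‖ ^ 2) * Real.rpow ((1 - ‖z‖) / (1 + ‖z‖)) lam ≤
          ‖deriv h z‖ ^ 2 - ‖deriv g z‖ ^ 2 ∧
        ‖deriv h z‖ ^ 2 - ‖deriv g z‖ ^ 2 ≤
          (1 - ‖deriv g 0‖ ^ 2) * Real.rpow ((1 + ‖z‖) / (1 - ‖z‖)) lam := by
  intro z hz
  have hr1 : ‖z‖ < 1 := mem_ball_zero_iff.mp hz
  have hr0 : (0:ℝ) ≤ ‖z‖ := norm_nonneg z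
  set r := ‖z‖ with hrdef
  have hmem : ∀ t ∈ Set.Icc (0:ℝ) 1, ((t:ℂ) * z) ∈ Metric.ball (0:ℂ) 1 := by
    intro t ht
    rw [mem_ball_zero_iff, norm_mul, Complex.norm_real, Real.norm_eq_abs, _root_.abs_of_nonneg ht.1]
    nlinarith [ht.2, ht.1]
  have hnt : ∀ t ∈ Set.Icc (0:ℝ) 1, ‖(t:ℂ) * z‖ = t * r := by
    intro t ht
    rw [norm_mul, Complex.norm_real, Real.norm_eq_abs, _root_.abs_of_nonneg ht.1]
  set φ : ℝ → ℝ := fun t => ‖deriv h ((t:ℂ)*z)‖^2 - ‖deriv g ((t:ℂ)*z)‖^2 with hφdef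
  have hφpos : ∀ t ∈ Set.Icc (0:ℝ) 1, 0 < φ t := fun t ht => (aux15 h g hf _ (hmem t ht)).2.1
  have hφd : ∀ t ∈ Set.Icc (0:ℝ) 1,
      HasDerivAt φ (2 * (φ t * (z * PH h g ((t:ℂ)*z)).re)) t := by
    intro t ht
    obtain ⟨ha, hJ, hAh, hAg, hkey⟩ := aux15 h g hf _ (hmem t ht)
    have hc : HasDerivAt (fun s:ℝ => (s:ℂ)*z) z t := by
      simpa using (hasDerivAt_id t).ofReal_comp.mul_const z
    have hF : HasDerivAt (fun s:ℝ => deriv h ((s:ℂ)*z)) (z * deriv (deriv h) ((t:ℂ)*z)) t := by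
      simpa [Function.comp_def, smul_eq_mul] using HasDerivAt.scomp t hAh hc
    have hG : HasDerivAt (fun s:ℝ => deriv g ((s:ℂ)*z)) (z * deriv (deriv g) ((t:ℂ)*z)) t := by
      simpa [Function.comp_def, smul_eq_mul] using HasDerivAt.scomp t hAg hc
    have h3 := (sq_deriv15 hF).sub (sq_deriv15 hG)
    refine h3.congr_deriv ?_
    have hid : (starRingEnd ℂ) (deriv h ((t:ℂ)*z)) * (z * deriv (deriv h) ((t:ℂ)*z))
         - (starRingEnd ℂ) (deriv g ((t:ℂ)*z)) * (z * deriv (deriv g) ((t:ℂ)*z))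
         = ((φ t : ℝ):ℂ) * (z * PH h g ((t:ℂ)*z)) := by
      calc (starRingEnd ℂ) (deriv h ((t:ℂ)*z)) * (z * deriv (deriv h) ((t:ℂ)*z))
            - (starRingEnd ℂ) (deriv g ((t:ℂ)*z)) * (z * deriv (deriv g) ((t:ℂ)*z))
          = z * ((starRingEnd ℂ) (deriv h ((t:ℂ)*z)) * deriv (deriv h) ((t:ℂ)*z)
              - (starRingEnd ℂ) (deriv g ((t:ℂ)*z)) * deriv (deriv g) ((t:ℂ)*z)) := by ring
        _ = z * (((‖deriv h ((t:ℂ)*z)‖^2 - ‖deriv g ((t:ℂ)*z)‖^2 : ℝ):ℂ) * PH h g ((t:ℂ)*z)) := by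
              rw [hkey]
        _ = ((φ t : ℝ):ℂ) * (z * PH h g ((t:ℂ)*z)) := by rw [hφdef]; ring
    have hre := congrArg Complex.re hid
    rw [Complex.sub_re, Complex.re_ofReal_mul] at hre
    linarith [hre]
  set ψ : ℝ → ℝ := fun t => Real.log (φ t) with hψdef
  have hψd : ∀ t ∈ Set.Icc (0:ℝ) 1,
      HasDerivAt ψ (2 * (z * PH h g ((t:ℂ)*z)).re) t := by
    intro t ht
    have hd := (hφd t ht).log (hφpos t ht).ne'
    convert hd using 1
    field_simp [(hφpos t ht).ne']
  set L : ℝ → ℝ := fun t => lam * (Real.log (1 + t*r) - Real.log (1 - t*r)) with hLdef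
  have hpos1 : ∀ t ∈ Set.Icc (0:ℝ) 1, 0 < 1 + t*r ∧ 0 < 1 - t*r := by
    intro t ht
    constructor
    · nlinarith [ht.1]
    · nlinarith [ht.1, ht.2]
  have hLd : ∀ t ∈ Set.Icc (0:ℝ) 1,
      HasDerivAt L (lam * (r/(1+t*r) + r/(1-t*r))) t := by
    intro t ht
    obtain ⟨p1, p2⟩ := hpos1 t ht
    have d1 : HasDerivAt (fun s:ℝ => 1 + s*r) r t := by
      simpa using ((hasDerivAt_id t).mul_const r).const_add 1
    have d2 : HasDerivAt (fun s:ℝ => 1 - s*r) (-r) t := by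
      simpa using ((hasDerivAt_id t).mul_const r).const_sub 1
    have hd := ((d1.log p1.ne').sub (d2.log p2.ne')).const_mul lam
    refine hd.congr_deriv ?_
    ring
  have hbnd : ∀ t ∈ Set.Icc (0:ℝ) 1,
      |2 * (z * PH h g ((t:ℂ)*z)).re| ≤ lam * (r/(1+t*r) + r/(1-t*r)) := by
    intro t ht
    obtain ⟨p1, p2⟩ := hpos1 t ht
    have hP := hnorm _ (hmem t ht)
    rw [hnt t ht] at hP
    have hden : 0 < 1 - (t*r)^2 := by nlinarith
    have hab : |(z * PH h g ((t:ℂ)*z)).re| ≤ r * ‖PH h g ((t:ℂ)*z)‖ := by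
      calc |(z * PH h g ((t:ℂ)*z)).re| ≤ ‖z * PH h g ((t:ℂ)*z)‖ := by
            exact Complex.abs_re_le_norm _
        _ = r * ‖PH h g ((t:ℂ)*z)‖ := by rw [norm_mul]
    have e : lam * (r/(1+t*r) + r/(1-t*r)) = 2*(r*(lam/(1-(t*r)^2))) := by
      rw [div_add_div _ _ p1.ne' p2.ne', show 1 - (t*r)^2 = (1+t*r)*(1-t*r) by ring]
      ring
    rw [e]
    have h2 : ‖PH h g ((t:ℂ)*z)‖ ≤ lam/(1-(t*r)^2) := by
      rw [le_div_iff₀ hden]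
      nlinarith [hP]
    calc |2 * (z * PH h g ((t:ℂ)*z)).re| = 2 * |(z * PH h g ((t:ℂ)*z)).re| := by
          rw [abs_mul]; norm_num
      _ ≤ 2 * (r * ‖PH h g ((t:ℂ)*z)‖) := by linarith
      _ ≤ 2 * (r * (lam/(1-(t*r)^2))) := by
          have := mul_le_mul_of_nonneg_left h2 hr0
          linarith
  have main : ∀ s : ℝ, |s| = 1 → L 0 + s * ψ 0 ≤ L 1 + s * ψ 1 := by
    intro s hs
    have D : ∀ t ∈ Set.Icc (0:ℝ) 1, HasDerivAt (fun t => L t + s * ψ t)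
        (lam * (r/(1+t*r) + r/(1-t*r)) + s * (2 * (z * PH h g ((t:ℂ)*z)).re)) t := by
      intro t ht
      exact (hLd t ht).add ((hψd t ht).const_mul s)
    have hmono := monotoneOn_of_deriv_nonneg (convex_Icc (0:ℝ) 1)
      (fun t ht => (D t ht).continuousAt.continuousWithinAt)
      (fun t ht => (D t (interior_subset ht)).differentiableAt.differentiableWithinAt)
      (fun t ht => by
        rw [(D t (interior_subset ht)).deriv]
        have hb := hbnd t (interior_subset ht)
        have habs : |s * (2 * (z * PH h g ((t:ℂ)*z)).re)| = |2 * (z * PH h g ((t:ℂ)*z)).re| := by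
          rw [abs_mul, hs, one_mul]
        have := neg_abs_le (s * (2 * (z * PH h g ((t:ℂ)*z)).re))
        linarith)
    exact hmono (Set.left_mem_Icc.mpr zero_le_one) (Set.right_mem_Icc.mpr zero_le_one) zero_le_one
  have hL0 : L 0 = 0 := by simp [hLdef]
  have hφ0 : φ 0 = 1 - ‖deriv g 0‖^2 := by
    simp [hφdef, h1]
  have hφ1 : φ 1 = ‖deriv h z‖^2 - ‖deriv g z‖^2 := by
    simp [hφdef]
  have h0mem : (0:ℝ) ∈ Set.Icc (0:ℝ) 1 := Set.left_mem_Icc.mpr zero_le_one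
  have h1mem : (1:ℝ) ∈ Set.Icc (0:ℝ) 1 := Set.right_mem_Icc.mpr zero_le_one
  have h0pos := hφpos 0 h0mem
  have h1pos := hφpos 1 h1mem
  have mup : ψ 1 ≤ ψ 0 + L 1 := by
    have := main (-1) (by norm_num)
    rw [hL0] at this; linarith
  have mlo : ψ 0 - L 1 ≤ ψ 1 := by
    have := main 1 (by norm_num)
    rw [hL0] at this; linarith
  have hL1 : L 1 = lam * (Real.log (1+r) - Real.log (1-r)) := by simp [hLdef]
  have hp1 : (0:ℝ) < 1 + r := by linarith
  have hp2 : (0:ℝ) < 1 - r := by linarith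
  have hψ0 : ψ 0 = Real.log (φ 0) := rfl
  have hψ1 : ψ 1 = Real.log (φ 1) := rfl
  constructor
  · rw [← hφ0, ← hφ1]
    have hrp : Real.rpow ((1-r)/(1+r)) lam = Real.exp (lam * Real.log ((1-r)/(1+r))) := by
      show ((1-r)/(1+r)) ^ lam = _
      rw [Real.rpow_def_of_pos (div_pos hp2 hp1) lam, mul_comm]
    rw [hrp, Real.log_div hp2.ne' hp1.ne']
    calc φ 0 * Real.exp (lam * (Real.log (1-r) - Real.log (1+r)))
        = Real.exp (ψ 0 + lam * (Real.log (1-r) - Real.log (1+r))) := by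
          rw [Real.exp_add, Real.exp_log h0pos]
      _ ≤ Real.exp (ψ 1) := by
          apply Real.exp_le_exp.mpr
          rw [hL1] at mlo
          linarith
      _ = φ 1 := Real.exp_log h1pos
  · rw [← hφ0, ← hφ1]
    have hrp : Real.rpow ((1+r)/(1-r)) lam = Real.exp (lam * Real.log ((1+r)/(1-r))) := by
      show ((1+r)/(1-r)) ^ lam = _
      rw [Real.rpow_def_of_pos (div_pos hp1 hp2) lam, mul_comm]
    rw [hrp, Real.log_div hp1.ne' hp2.ne']
    calc φ 1 = Real.exp (ψ 1) := (Real.exp_log h1pos).symm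
      _ ≤ Real.exp (ψ 0 + lam * (Real.log (1+r) - Real.log (1-r))) := by
          apply Real.exp_le_exp.mpr
          rw [hL1] at mup
          linarith
      _ = φ 0 * Real.exp (lam * (Real.log (1+r) - Real.log (1-r))) := by
          rw [Real.exp_add, Real.exp_log h0pos]
end

section
/- Let f = h + conj(g) be a sense-preserving harmonic mapping in D normalized (h(0)=0, h'(0)=1, g(0)=0, b₁=g'(0)) with ||P_f|| ≤ λ. Then for all z ∈ D: sqrt(1-|b₁|²)·((1-|z|)/(1+|z|))^{λ/2} ≤ |h'(z)| ≤ (1+|b₁||z|)·(1+|z|)^{(λ-1)/2}/(1-|z|)^{(λ+1)/2}. -/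
open Complex Metric Set

/-- Chain rule: complex-differentiable function along a real curve. -/
lemma chainCR {F : ℂ → ℂ} {w : ℂ} (hF : DifferentiableAt ℂ F w) {γ : ℝ → ℂ} {t : ℝ} {γ' : ℂ}
    (hγ : HasDerivAt γ γ' t) (hw : γ t = w) :
    HasDerivAt (fun s => F (γ s)) (deriv F w * γ') t := by
  have h1 : HasFDerivAt F (ContinuousLinearMap.smulRight (1 : ℂ →L[ℂ] ℂ) (deriv F w)) w :=
    hF.hasDerivAt.hasFDerivAt
  have h2 := (h1.restrictScalars ℝ)
  rw [← hw] at h2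
  have h3 := h2.comp_hasDerivAt t hγ
  rw [hw] at h3
  rw [mul_comm]
  exact h3

lemma hasDerivAt_normSq {C : ℝ → ℂ} {C' : ℂ} {t : ℝ} (hC : HasDerivAt C C' t) :
    HasDerivAt (fun s => Complex.normSq (C s)) (2 * ((starRingEnd ℂ) (C t) * C').re) t := by
  have hre : HasDerivAt (fun s => (C s).re) C'.re t := by
    exact (Complex.reCLM.hasFDerivAt.comp_hasDerivAt t hC)
  have him : HasDerivAt (fun s => (C s).im) C'.im t := by
    exact (Complex.imCLM.hasFDerivAt.comp_hasDerivAt t hC)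
  have := (hre.mul hre).add (him.mul him)
  have heq : (fun s => (C s).re * (C s).re + (C s).im * (C s).im)
      = fun s => Complex.normSq (C s) := by
    funext s; simp [Complex.normSq_apply]
  rw [← heq]
  refine this.congr_deriv ?_
  simp [Complex.mul_re, Complex.conj_re, Complex.conj_im]
  ring

lemma re_div_eq (x y : ℂ) : (x / y).re = ((starRingEnd ℂ) y * x).re / Complex.normSq y := by
  rcases eq_or_ne y 0 with rfl | hy
  · simp
  · rw [div_eq_mul_inv, Complex.inv_def]
    rw [show (((Complex.normSq y)⁻¹ : ℝ) : ℂ) = (((Complex.normSq y : ℝ) : ℂ))⁻¹ by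
      push_cast; ring]
    rw [div_eq_mul_inv]
    rw [show x * ((starRingEnd ℂ) y * (((Complex.normSq y : ℝ)):ℂ)⁻¹)
        = ((starRingEnd ℂ) y * x) * (((Complex.normSq y : ℝ)):ℂ)⁻¹ by ring]
    rw [← Complex.ofReal_inv, Complex.mul_re]
    simp

lemma normSq_moebius_key (a w : ℂ) :
    Complex.normSq (1 - (starRingEnd ℂ) a * w) - Complex.normSq (w - a)
      = (1 - Complex.normSq a) * (1 - Complex.normSq w) := by
  simp only [Complex.normSq_apply, Complex.sub_re, Complex.sub_im, Complex.mul_re,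
    Complex.mul_im, Complex.one_re, Complex.one_im, Complex.conj_re, Complex.conj_im]
  ring

lemma moebius_denom_ne (a w : ℂ) (ha : ‖a‖ < 1) (hw : ‖w‖ < 1) :
    1 - (starRingEnd ℂ) a * w ≠ 0 := by
  intro hzero
  have : ‖(starRingEnd ℂ) a * w‖ < 1 := by
    rw [norm_mul, RCLike.norm_conj]
    nlinarith [norm_nonneg a, norm_nonneg w]
  rw [sub_eq_zero] at hzero
  rw [← hzero] at this
  simp at this

lemma moebius_mem_ball (a w : ℂ) (ha : ‖a‖ < 1) (hw : ‖w‖ < 1) :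
    ‖(w - a) / (1 - (starRingEnd ℂ) a * w)‖ < 1 := by
  have hd := moebius_denom_ne a w ha hw
  rw [norm_div, div_lt_one (norm_pos_iff.2 hd)]
  have h1 : Complex.normSq (w - a) < Complex.normSq (1 - (starRingEnd ℂ) a * w) := by
    have := normSq_moebius_key a w
    have ha' : Complex.normSq a < 1 := by
      rw [← Complex.sq_norm] at *; nlinarith [norm_nonneg a,
        ha]
    have hw' : Complex.normSq w < 1 := by
      rw [← Complex.sq_norm] at *; nlinarith [norm_nonneg w,
        hw]
    nlinarith
  have := Real.sqrt_lt_sqrt (Complex.normSq_nonneg _) h1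
  rwa [Complex.norm_def, Complex.norm_def]

set_option maxHeartbeats 1000000 in
lemma lindelof {F : ℂ → ℂ} (hd : DifferentiableOn ℂ F (ball 0 1))
    (hm : ∀ w ∈ ball (0:ℂ) 1, ‖F w‖ < 1) {z : ℂ} (hz : z ∈ ball (0:ℂ) 1) :
    ‖F z‖ * (1 + ‖F 0‖ * ‖z‖) ≤ ‖F 0‖ + ‖z‖ := by
  have h0 : (0:ℂ) ∈ ball (0:ℂ) 1 := by simp
  set a := F 0 with ha
  have hab : ‖a‖ < 1 := hm 0 h0
  -- the auxiliary map
  set ψ : ℂ → ℂ := fun w => (F w - a) / (1 - (starRingEnd ℂ) a * F w) with hψ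
  have hdenom : ∀ w ∈ ball (0:ℂ) 1, 1 - (starRingEnd ℂ) a * F w ≠ 0 := fun w hw =>
    moebius_denom_ne a (F w) hab (hm w hw)
  have hψd : DifferentiableOn ℂ ψ (ball 0 1) := by
    apply DifferentiableOn.div
    · exact hd.sub (differentiableOn_const a)
    · exact (differentiableOn_const 1).sub ((differentiableOn_const _).mul hd)
    · exact hdenom
  have hψm : MapsTo ψ (ball (0:ℂ) 1) (ball (0:ℂ) 1) := by
    intro w hw
    rw [mem_ball_zero_iff]
    exact moebius_mem_ball a (F w) hab (hm w hw)
  have hψ0 : ψ 0 = 0 := by simp [hψ, ha]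
  have hsch : ‖ψ z‖ ≤ ‖z‖ := by
    have := Complex.norm_le_norm_of_mapsTo_ball hψd (hψm.mono_right ball_subset_closedBall) hψ0 (mem_ball_zero_iff.1 hz)
    exact this
  -- turn into |F z - a| ≤ |z| |1 - ā F z|
  have hkey : ‖F z - a‖ ≤ ‖z‖ * ‖1 - (starRingEnd ℂ) a * F z‖ := by
    have hden := hdenom z hz
    rw [hψ] at hsch
    rw [norm_div] at hsch
    rw [div_le_iff₀ (norm_pos_iff.2 hden)] at hsch
    linarith [hsch]
  rcases eq_or_ne z 0 with rfl | hz0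
  · simp [ha]
  -- now real arithmetic
  set s := ‖F z‖ with hs
  set b := ‖a‖ with hb
  set t := ‖z‖ with ht
  have hs0 : 0 ≤ s := norm_nonneg _
  have hs1 : s < 1 := hm z hz
  have hb0 : 0 ≤ b := norm_nonneg _
  have ht0 : 0 < t := norm_pos_iff.2 hz0
  have ht1 : t < 1 := mem_ball_zero_iff.1 hz
  have hR : |((starRingEnd ℂ) a * F z).re| ≤ b * s := by
    calc |((starRingEnd ℂ) a * F z).re| ≤ ‖(starRingEnd ℂ) a * F z‖ := by
          exact Complex.abs_re_le_norm _
      _ = b * s := by rw [norm_mul, RCLike.norm_conj]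
  set R := ((starRingEnd ℂ) a * F z).re with hRdef
  have hexp1 : Complex.normSq (F z - a) = Complex.normSq (F z) - 2*R + Complex.normSq a := by
    simp only [hRdef, Complex.normSq_apply, Complex.sub_re, Complex.sub_im, Complex.mul_re,
      Complex.mul_im, Complex.conj_re, Complex.conj_im]
    ring
  have hexp2 : Complex.normSq (1 - (starRingEnd ℂ) a * F z)
      = 1 - 2*R + Complex.normSq a * Complex.normSq (F z) := by
    simp only [hRdef, Complex.normSq_apply, Complex.sub_re, Complex.sub_im, Complex.mul_re,
      Complex.mul_im, Complex.one_re, Complex.one_im, Complex.conj_re, Complex.conj_im]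
    ring
  have hns_s : Complex.normSq (F z) = s^2 := by
    rw [hs, Complex.sq_norm]
  have hns_b : Complex.normSq a = b^2 := by
    rw [hb, Complex.sq_norm]
  have hsq : s^2 - 2*R + b^2 ≤ t^2 * (1 - 2*R + b^2 * s^2) := by
    have h2 : ‖F z - a‖^2 ≤ (t * ‖1 - (starRingEnd ℂ) a * F z‖)^2 := by
      apply pow_le_pow_left₀ (norm_nonneg _) hkey
    rw [mul_pow, Complex.sq_norm (F z - a), Complex.sq_norm (1 - (starRingEnd ℂ) a * F z),
      hexp1, hexp2, hns_s, hns_b] at h2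
    linarith
  by_contra hcon
  push_neg at hcon
  have hfirst : 0 < s*(1+b*t) - (b+t) := by linarith
  have htb1 : 0 < 1 - t*b := by nlinarith
  have htb2 : (0:ℝ) < 1 + b*t := by nlinarith
  have hb2 : 0 < 1 - b^2 := by nlinarith
  have hsb : b < s := by
    by_contra hc
    push_neg at hc
    nlinarith [mul_nonneg (sub_nonneg.2 hc) htb2.le, mul_pos ht0 hb2]
  have hsecond : 0 < (1-t*b)*s + (t-b) := by
    nlinarith [mul_pos (sub_pos.2 hsb) htb1, mul_pos ht0 hb2]
  have hRle : R ≤ b*s := (abs_le.1 hR).2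
  have ht2 : (0:ℝ) ≤ 1 - t^2 := by nlinarith
  have hD : 0 ≤ (b*s - R)*(1-t^2) := mul_nonneg (by linarith) ht2
  have hfact : (s*(1+b*t) - (b+t)) * ((1-t*b)*s + (t-b))
      = (s^2 - 2*R + b^2 - t^2*(1-2*R+b^2*s^2)) - 2*((b*s - R)*(1-t^2)) := by ring
  have hle : (s*(1+b*t) - (b+t)) * ((1-t*b)*s + (t-b)) ≤ 0 := by
    rw [hfact]; linarith
  exact absurd hle (not_le.2 (mul_pos hfirst hsecond))

lemma gronwall {u d : ℝ → ℝ} {lam r : ℝ} (hr : 0 ≤ r) (hr1 : r < 1)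
    (hu : ∀ t ∈ Set.Icc (0:ℝ) r, HasDerivAt u (d t) t)
    (hbd : ∀ t ∈ Set.Icc (0:ℝ) r, |d t| ≤ lam * (1/(1+t) + 1/(1-t))) :
    |u r - u 0| ≤ lam * (Real.log (1+r) - Real.log (1-r)) := by
  set G : ℝ → ℝ := fun t => lam * (Real.log (1+t) - Real.log (1-t)) with hG
  have hGd : ∀ t ∈ Set.Icc (0:ℝ) r, HasDerivAt G (lam * (1/(1+t) + 1/(1-t))) t := by
    intro t ht
    have h1 : (0:ℝ) < 1 + t := by cases ht with | intro h1 h2 => linarith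
    have h2 : (0:ℝ) < 1 - t := by cases ht with | intro ha hb => linarith
    have d1 : HasDerivAt (fun t : ℝ => Real.log (1+t)) (1/(1+t)) t := by
      have := ((hasDerivAt_id t).const_add 1).log h1.ne'
      simpa using this
    have d2 : HasDerivAt (fun t : ℝ => Real.log (1-t)) (-(1/(1-t))) t := by
      have := ((hasDerivAt_id t).const_sub 1).log h2.ne'
      convert this using 1
      · rfl
      · simp only [id, neg_div]
    have := ((d1.sub d2).const_mul lam)
    refine this.congr_deriv ?_
    ring
  have key : ∀ (v : ℝ → ℝ) (dv : ℝ → ℝ), (∀ t ∈ Set.Icc (0:ℝ) r, HasDerivAt v (dv t) t) →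
      (∀ t ∈ Set.Icc (0:ℝ) r, 0 ≤ dv t) → v 0 ≤ v r := by
    intro v dv hv hdv
    have hmono : MonotoneOn v (Set.Icc (0:ℝ) r) := by
      apply monotoneOn_of_hasDerivWithinAt_nonneg (convex_Icc 0 r)
      · intro t ht
        exact (hv t ht).continuousAt.continuousWithinAt
      · intro t ht
        have ht' : t ∈ Set.Icc (0:ℝ) r := interior_subset ht
        exact (hv t ht').hasDerivWithinAt
      · intro t ht
        exact hdv t (interior_subset ht)
    exact hmono (Set.left_mem_Icc.2 hr) (Set.right_mem_Icc.2 hr) hr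
  have h01 : ∀ t ∈ Set.Icc (0:ℝ) r, 0 ≤ lam * (1/(1+t) + 1/(1-t)) - d t := by
    intro t ht; have := hbd t ht; have := abs_le.1 this; linarith [this.2]
  have h02 : ∀ t ∈ Set.Icc (0:ℝ) r, 0 ≤ lam * (1/(1+t) + 1/(1-t)) + d t := by
    intro t ht; have := hbd t ht; have := abs_le.1 this; linarith [this.1]
  have k1 : G 0 - u 0 ≤ G r - u r → u r - u 0 ≤ G r - G 0 := by intro hx; linarith
  have k2 := key (fun t => G t - u t) (fun t => lam * (1/(1+t) + 1/(1-t)) - d t)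
    (fun t ht => (hGd t ht).sub (hu t ht)) h01
  have k3 := key (fun t => G t + u t) (fun t => lam * (1/(1+t) + 1/(1-t)) + d t)
    (fun t ht => (hGd t ht).add (hu t ht)) h02
  have hG0 : G 0 = 0 := by simp [hG]
  rw [abs_le]
  constructor
  · simp only [hG] at k3 hG0 ⊢; linarith
  · simp only [hG] at k2 hG0 ⊢; linarith

set_option maxHeartbeats 1600000 in
theorem stmt16 (h g : ℂ → ℂ) (hf : SPH h g) (lam : ℝ)
    (h0 : h 0 = 0) (h1 : deriv h 0 = 1)
    (hnorm : ∀ z ∈ Metric.ball (0 : ℂ) 1, (1 - ‖z‖ ^ 2) * ‖PH h g z‖ ≤ lam) :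
    ∀ z ∈ Metric.ball (0 : ℂ) 1,
      Real.sqrt (1 - ‖deriv g 0‖ ^ 2) * Real.rpow ((1 - ‖z‖) / (1 + ‖z‖)) (lam / 2) ≤
          ‖deriv h z‖ ∧
        ‖deriv h z‖ ≤ (1 + ‖deriv g 0‖ * ‖z‖) *
          Real.rpow (1 + ‖z‖) ((lam - 1) / 2) / Real.rpow (1 - ‖z‖) ((lam + 1) / 2) := by
  obtain ⟨hh, hg, hg0, hsp⟩ := hf
  have h0mem : (0:ℂ) ∈ ball (0:ℂ) 1 := by simp
  have hh' : AnalyticOnNhd ℂ (deriv h) (ball 0 1) := (hh.analyticOnNhd isOpen_ball).deriv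
  have hg' : AnalyticOnNhd ℂ (deriv g) (ball 0 1) := (hg.analyticOnNhd isOpen_ball).deriv
  have hne : ∀ w ∈ ball (0:ℂ) 1, deriv h w ≠ 0 := by
    intro w hw
    have := hsp w hw
    intro hc
    rw [hc] at this
    simp only [norm_zero] at this
    exact absurd this (not_lt.2 (norm_nonneg _))
  have hωdiff : ∀ w ∈ ball (0:ℂ) 1, DifferentiableAt ℂ (dil h g) w := by
    intro w hw
    have : DifferentiableAt ℂ (fun u => deriv g u / deriv h u) w :=
      ((hg' w hw).differentiableAt).div ((hh' w hw).differentiableAt) (hne w hw)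
    exact this
  have hω1 : ∀ w ∈ ball (0:ℂ) 1, ‖dil h g w‖ < 1 := by
    intro w hw
    rw [dil, norm_div, div_lt_one ((norm_nonneg _).lt_of_ne' ?_)]
    · exact hsp w hw
    · simpa using hne w hw
  have hω0 : dil h g 0 = deriv g 0 := by rw [dil, h1, div_one]
  set b := ‖deriv g 0‖ with hbdef
  have hb1 : b < 1 := by
    have := hsp 0 h0mem
    rwa [h1, norm_one] at this
  have hb0 : 0 ≤ b := norm_nonneg _
  have hN : Complex.normSq (deriv g 0) = b^2 := by
    rw [hbdef, Complex.sq_norm]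
  have hNpos : 0 < 1 - b^2 := by nlinarith
  intro z hz
  set r := ‖z‖ with hrdef
  have hr0 : 0 ≤ r := norm_nonneg _
  have hr1 : r < 1 := mem_ball_zero_iff.1 hz
  -- main J bound
  have hJ : (1-b^2) * ((1-r)/(1+r))^lam ≤
        Complex.normSq (deriv h z) * (1 - Complex.normSq (dil h g z)) ∧
      Complex.normSq (deriv h z) * (1 - Complex.normSq (dil h g z)) ≤
        (1-b^2) * ((1+r)/(1-r))^lam := by
    rcases eq_or_ne z 0 with hz0 | hz0
    · subst hz0
      simp only [hrdef, norm_zero, sub_zero, add_zero, one_div, div_one, Real.one_rpow,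
        h1, Complex.normSq_one, one_mul, hω0, hN]
      norm_num
    · have hrpos : 0 < r := norm_pos_iff.2 hz0
      have hrne : (r:ℂ) ≠ 0 := by
        simpa using hrpos.ne'
      set e : ℂ := (↑r)⁻¹ * z with hedef
      have he : ‖e‖ = 1 := by
        rw [hedef, norm_mul, norm_inv, Complex.norm_real, Real.norm_eq_abs,
          _root_.abs_of_nonneg hr0, ← hrdef, inv_mul_cancel₀ hrpos.ne']
      set γ : ℝ → ℂ := fun t => (↑t) * e with hγdef
      have hγr : γ r = z := by
        rw [hγdef]
        show (↑r) * ((↑r)⁻¹ * z) = z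
        rw [← mul_assoc, mul_inv_cancel₀ hrne, one_mul]
      have hγ0 : γ 0 = 0 := by simp [hγdef]
      have hγnorm : ∀ t : ℝ, ‖γ t‖ = |t| := by
        intro t
        rw [hγdef]
        show ‖(↑t) * e‖ = |t|
        rw [norm_mul, he, mul_one, Complex.norm_real, Real.norm_eq_abs]
      have hmem : ∀ t ∈ Set.Icc (0:ℝ) r, γ t ∈ ball (0:ℂ) 1 := by
        intro t ht
        rw [mem_ball_zero_iff, hγnorm, _root_.abs_of_nonneg ht.1]
        exact lt_of_le_of_lt ht.2 hr1
      have hγd : ∀ t : ℝ, HasDerivAt γ e t := by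
        intro t
        have := ((hasDerivAt_id t).ofReal_comp).mul_const e
        simpa using this
      set U : ℝ → ℝ := fun t => Real.log (Complex.normSq (deriv h (γ t)))
        + Real.log (1 - Complex.normSq (dil h g (γ t))) with hUdef
      set D : ℝ → ℝ := fun t => 2 * (e * PH h g (γ t)).re with hDdef
      have hUd : ∀ t ∈ Set.Icc (0:ℝ) r, HasDerivAt U (D t) t := by
        intro t ht
        have hw := hmem t ht
        have hA := chainCR ((hh' (γ t) hw).differentiableAt) (hγd t) rfl
        have hB := chainCR (hωdiff (γ t) hw) (hγd t) rfl
        have hnsA := hasDerivAt_normSq hA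
        have hnsB := hasDerivAt_normSq hB
        have hAne : Complex.normSq (deriv h (γ t)) ≠ 0 := by
          simpa [map_eq_zero] using hne (γ t) hw
        have hBlt : Complex.normSq (dil h g (γ t)) < 1 := by
          have := hω1 (γ t) hw
          nlinarith [norm_nonneg (dil h g (γ t)), Complex.sq_norm (dil h g (γ t))]
        have hl1 := hnsA.log hAne
        have hl2 := (hnsB.const_sub 1).log (by linarith : (1:ℝ) - Complex.normSq (dil h g (γ t)) ≠ 0)
        have hsum := hl1.add hl2
        refine hsum.congr_deriv (Eq.symm ?_)
        -- the derivative identity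
        show 2 * (e * PH h g (γ t)).re = _
        rw [PH, pd]
        have hc : ((1 - ‖dil h g (γ t)‖^2 : ℝ) : ℂ)
            = ((1 - Complex.normSq (dil h g (γ t)) : ℝ) : ℂ) := by
          rw [Complex.sq_norm]
        rw [hc, mul_sub, sub_re]
        rw [show e * (deriv (deriv h) (γ t) / deriv h (γ t))
            = (e * deriv (deriv h) (γ t)) / deriv h (γ t) from (mul_div_assoc _ _ _).symm]
        rw [re_div_eq]
        rw [show e * ((starRingEnd ℂ) (dil h g (γ t)) * deriv (dil h g) (γ t)
              / ((1 - Complex.normSq (dil h g (γ t)) : ℝ) : ℂ))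
            = ((starRingEnd ℂ) (dil h g (γ t)) * (deriv (dil h g) (γ t) * e))
              / ((1 - Complex.normSq (dil h g (γ t)) : ℝ) : ℂ) from by ring]
        rw [Complex.div_ofReal_re]
        rw [show (starRingEnd ℂ) (deriv h (γ t)) * (e * deriv (deriv h) (γ t))
            = (starRingEnd ℂ) (deriv h (γ t)) * (deriv (deriv h) (γ t) * e) from by ring]
        ring
      have hDbd : ∀ t ∈ Set.Icc (0:ℝ) r, |D t| ≤ lam * (1/(1+t) + 1/(1-t)) := by
        intro t ht
        have hw := hmem t ht
        have ht1 : t < 1 := lt_of_le_of_lt ht.2 hr1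
        have h1t : (0:ℝ) < 1 + t := by linarith [ht.1]
        have h2t : (0:ℝ) < 1 - t := by linarith
        have hwt : ‖γ t‖ = t := by rw [hγnorm, _root_.abs_of_nonneg ht.1]
        have hPb := hnorm (γ t) hw
        rw [hwt] at hPb
        have hPle : ‖PH h g (γ t)‖ ≤ lam / (1 - t^2) := by
          rw [le_div_iff₀ (by nlinarith)]
          linarith [hPb]
        calc |D t| = 2 * |(e * PH h g (γ t)).re| := by
              rw [hDdef]; rw [abs_mul]; norm_num
          _ ≤ 2 * ‖e * PH h g (γ t)‖ := by
              have := Complex.abs_re_le_norm (e * PH h g (γ t))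
              linarith
          _ = 2 * ‖PH h g (γ t)‖ := by rw [norm_mul, he, one_mul]
          _ ≤ 2 * (lam / (1 - t^2)) := by linarith
          _ = lam * (1/(1+t) + 1/(1-t)) := by
              have heq : 1/(1+t) + 1/(1-t) = 2/(1-t^2) := by
                rw [div_add_div _ _ h1t.ne' h2t.ne']
                rw [show (1:ℝ)*(1-t) + (1+t)*1 = 2 from by ring,
                  show (1+t)*(1-t) = 1-t^2 from by ring]
              rw [heq]
              rw [div_eq_mul_inv, div_eq_mul_inv]
              ring
      have hgr := gronwall hr0 hr1 hUd hDbd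
      rw [hUdef] at hgr
      simp only [hγr, hγ0, h1, Complex.normSq_one, Real.log_one, zero_add, hω0] at hgr
      rw [hN] at hgr
      -- exponentiate
      have hXpos : 0 < Complex.normSq (deriv h z) := Complex.normSq_pos.2 (hne z hz)
      have hSlt : Complex.normSq (dil h g z) < 1 := by
        have := hω1 z hz
        nlinarith [norm_nonneg (dil h g z), Complex.sq_norm (dil h g z)]
      have hSpos : (0:ℝ) < 1 - Complex.normSq (dil h g z) := by linarith
      have hJpos : 0 < Complex.normSq (deriv h z) * (1 - Complex.normSq (dil h g z)) :=
        mul_pos hXpos hSpos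
      have hlogJ : Real.log (Complex.normSq (deriv h z) * (1 - Complex.normSq (dil h g z)))
          = Real.log (Complex.normSq (deriv h z)) + Real.log (1 - Complex.normSq (dil h g z)) :=
        Real.log_mul hXpos.ne' hSpos.ne'
      set M := lam * (Real.log (1+r) - Real.log (1-r)) with hMdef
      have habs := abs_le.1 hgr
      have hexpM : Real.exp M = ((1+r)/(1-r))^lam := by
        rw [hMdef, ← Real.log_div (by linarith) (by linarith)]
        rw [Real.rpow_def_of_pos (div_pos (by linarith) (by linarith))]
        ring_nf
      have hexpnM : Real.exp (-M) = ((1-r)/(1+r))^lam := by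
        rw [Real.exp_neg, hexpM, ← Real.inv_rpow (div_pos (by linarith) (by linarith)).le, inv_div]
      constructor
      · have : Real.log ((1-b^2) * ((1-r)/(1+r))^lam) ≤
            Real.log (Complex.normSq (deriv h z) * (1 - Complex.normSq (dil h g z))) := by
          rw [hlogJ, ← hexpnM, Real.log_mul hNpos.ne' (Real.exp_pos _).ne',
            Real.log_exp]
          linarith [habs.1]
        have := Real.exp_le_exp.2 this
        rwa [Real.exp_log (mul_pos hNpos (Real.rpow_pos_of_pos (div_pos (by linarith) (by linarith)) lam)), Real.exp_log hJpos] at this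
      · have : Real.log (Complex.normSq (deriv h z) * (1 - Complex.normSq (dil h g z)))
            ≤ Real.log ((1-b^2) * ((1+r)/(1-r))^lam) := by
          rw [hlogJ, ← hexpM, Real.log_mul hNpos.ne' (Real.exp_pos _).ne',
            Real.log_exp]
          linarith [habs.2]
        have := Real.exp_le_exp.2 this
        rwa [Real.exp_log hJpos, Real.exp_log (mul_pos hNpos (Real.rpow_pos_of_pos (div_pos (by linarith) (by linarith)) lam))] at this
  -- the dilatation bound
  have hlind : ‖dil h g z‖ * (1 + b * r) ≤ b + r := by
    have := lindelof (fun w hw => (hωdiff w hw).differentiableWithinAt) hω1 hz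
    rwa [hω0] at this
  -- final algebra
  have hXpos : 0 < Complex.normSq (deriv h z) := Complex.normSq_pos.2 (hne z hz)
  set s := ‖dil h g z‖ with hsdef
  have hs1 : s < 1 := hω1 z hz
  have hs0 : 0 ≤ s := norm_nonneg _
  have hS : Complex.normSq (dil h g z) = s^2 := by
    rw [hsdef, Complex.sq_norm]
  have hnormX : ‖deriv h z‖ = Real.sqrt (Complex.normSq (deriv h z)) := by
    rw [Complex.norm_def]
  have hr2 : (0:ℝ) < 1 - r^2 := by nlinarith
  have hypos : (0:ℝ) < (1-r)/(1+r) := div_pos (by linarith) (by linarith)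
  constructor
  · -- lower bound
    have hX1 : (1-b^2) * ((1-r)/(1+r))^lam ≤ Complex.normSq (deriv h z) := by
      have h2 := hJ.1
      have h3 : Complex.normSq (deriv h z) * (1 - Complex.normSq (dil h g z))
          ≤ Complex.normSq (deriv h z) := by
        nlinarith [Complex.normSq_nonneg (dil h g z), hXpos.le]
      linarith
    have hkey : Real.sqrt ((1-b^2) * ((1-r)/(1+r))^lam)
        = Real.sqrt (1-b^2) * ((1-r)/(1+r))^(lam/2) := by
      rw [Real.sqrt_mul hNpos.le]
      congr 1
      rw [Real.sqrt_eq_rpow, ← Real.rpow_mul hypos.le]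
      rw [show lam * (1/2:ℝ) = lam/2 from by ring]
    calc Real.sqrt (1-b^2) * Real.rpow ((1-r)/(1+r)) (lam/2)
        = Real.sqrt ((1-b^2) * ((1-r)/(1+r))^lam) := by rw [hkey]; rfl
      _ ≤ Real.sqrt (Complex.normSq (deriv h z)) := Real.sqrt_le_sqrt hX1
      _ = ‖deriv h z‖ := hnormX.symm
  · -- upper bound
    set K := ((1+r)/(1-r))^lam with hKdef
    have hKpos : 0 < K := Real.rpow_pos_of_pos (div_pos (by linarith) (by linarith)) lam
    have hkey2 : (1-b^2)*(1-r^2) ≤ (1-s^2)*(1+b*r)^2 := by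
      nlinarith [mul_self_le_mul_self (by positivity : (0:ℝ) ≤ s*(1+b*r)) hlind]
    have hXle : Complex.normSq (deriv h z) * ((1-b^2)*(1-r^2)) ≤ ((1-b^2) * K) * (1+b*r)^2 := by
      have hJ2 := hJ.2
      rw [hS] at hJ2
      calc Complex.normSq (deriv h z) * ((1-b^2)*(1-r^2))
          ≤ Complex.normSq (deriv h z) * ((1-s^2)*(1+b*r)^2) :=
            mul_le_mul_of_nonneg_left hkey2 hXpos.le
        _ = (Complex.normSq (deriv h z) * (1-s^2))*(1+b*r)^2 := by ring
        _ ≤ ((1-b^2) * K) * (1+b*r)^2 :=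
            mul_le_mul_of_nonneg_right hJ2 (sq_nonneg _)
    have hfin : Complex.normSq (deriv h z) ≤ K * (1+b*r)^2 / (1-r^2) := by
      rw [le_div_iff₀ hr2]
      rw [← mul_le_mul_iff_of_pos_left hNpos]
      calc (1-b^2) * (Complex.normSq (deriv h z) * (1-r^2))
          = Complex.normSq (deriv h z) * ((1-b^2)*(1-r^2)) := by ring
        _ ≤ ((1-b^2) * K) * (1+b*r)^2 := hXle
        _ = (1-b^2) * (K*(1+b*r)^2) := by ring
    set RHS := (1 + b*r) * (1+r)^((lam-1)/2) / (1-r)^((lam+1)/2) with hRHSdef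
    have hRHS0 : 0 ≤ RHS := by
      rw [hRHSdef]
      apply div_nonneg (mul_nonneg (by positivity) (Real.rpow_nonneg (by linarith) _))
        (Real.rpow_nonneg (by linarith) _)
    have hsqRHS : RHS^2 = K * (1+b*r)^2 / (1-r^2) := by
      rw [hRHSdef, div_pow, mul_pow]
      rw [show ((1+r)^((lam-1)/2))^2 = (1+r)^(lam-1) from by
        rw [← Real.rpow_natCast ((1+r)^((lam-1)/2)) 2, ← Real.rpow_mul (by linarith)]
        norm_num]
      rw [show ((1-r)^((lam+1)/2))^2 = (1-r)^(lam+1) from by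
        rw [← Real.rpow_natCast ((1-r)^((lam+1)/2)) 2, ← Real.rpow_mul (by linarith)]
        norm_num]
      rw [Real.rpow_sub (by linarith : (0:ℝ) < 1+r), Real.rpow_add (by linarith : (0:ℝ) < 1-r),
        Real.rpow_one, Real.rpow_one, hKdef,
        Real.div_rpow (by linarith : (0:ℝ) ≤ 1+r) (by linarith : (0:ℝ) ≤ 1-r)]
      have hne1 : (1+r) ≠ 0 := by linarith
      have hne2 : (1-r) ≠ 0 := by linarith
      have hne3 : (1-r)^lam ≠ 0 := (Real.rpow_pos_of_pos (by linarith) lam).ne'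
      have hne4 : (1-r^2) ≠ 0 := hr2.ne'
      field_simp
      ring
    calc ‖deriv h z‖ = Real.sqrt (Complex.normSq (deriv h z)) := hnormX
      _ ≤ Real.sqrt (RHS^2) := Real.sqrt_le_sqrt (by rw [hsqRHS]; exact hfin)
      _ = RHS := Real.sqrt_sq hRHS0
      _ = (1 + b*r) * Real.rpow (1+r) ((lam-1)/2) / Real.rpow (1-r) ((lam+1)/2) := rfl
end

section
/- Let f = h + conj(g) be a sense-preserving harmonic mapping in D. Suppose there exist β < -2 and r₀ ∈ (1 - 1/(2e), 1) such that |P_f(z)| ≤ 1/(1-|z|²) + β/((1-|z|²)·log(1/(1-|z|²))) for all r₀ < |z| < 1, and g'(0) = 0 with f normalized (h'(0)=1). Then h, g and f are bounded in D. -/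
open Complex Metric

noncomputable def mob (c z : ℂ) : ℂ := (c + z) / (1 + (starRingEnd ℂ) c * z)

lemma normSq_lt_one_of {c : ℂ} (hc : ‖c‖ < 1) : Complex.normSq c < 1 := by
  rw [Complex.normSq_eq_norm_sq]
  calc ‖c‖ ^ 2 = ‖c‖ ^ 2 := rfl
  _ < 1 := by nlinarith [norm_nonneg c]

lemma mob_norm_lt {c z : ℂ} (hc : ‖c‖ < 1) (hz : ‖z‖ < 1) :
    ‖c + z‖ < ‖1 + (starRingEnd ℂ) c * z‖ := by
  have hc2 := normSq_lt_one_of hc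
  have hz2 := normSq_lt_one_of hz
  have key : Complex.normSq (c + z) < Complex.normSq (1 + (starRingEnd ℂ) c * z) := by
    simp only [Complex.normSq_apply, Complex.add_re, Complex.add_im, Complex.mul_re,
      Complex.mul_im, Complex.conj_re, Complex.conj_im, Complex.one_re, Complex.one_im] at *
    nlinarith [mul_pos (sub_pos.2 hc2) (sub_pos.2 hz2)]
  have e1 : ‖c + z‖ = Real.sqrt (Complex.normSq (c + z)) := by
    rw [Complex.norm_def]
  have e2 : ‖1 + (starRingEnd ℂ) c * z‖ = Real.sqrt (Complex.normSq (1 + (starRingEnd ℂ) c * z)) := by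
    rw [Complex.norm_def]
  rw [e1, e2]
  exact Real.sqrt_lt_sqrt (Complex.normSq_nonneg _) key

lemma mob_denom_ne {c z : ℂ} (hc : ‖c‖ < 1) (hz : ‖z‖ < 1) :
    1 + (starRingEnd ℂ) c * z ≠ 0 := by
  intro hzero
  have h1 : (0:ℝ) ≤ ‖c + z‖ := norm_nonneg _
  have := mob_norm_lt hc hz
  rw [hzero, norm_zero] at this
  linarith

lemma mob_mapsTo {c : ℂ} (hc : ‖c‖ < 1) :
    Set.MapsTo (mob c) (ball (0 : ℂ) 1) (ball (0 : ℂ) 1) := by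
  intro z hz
  rw [mem_ball_zero_iff] at hz ⊢
  rw [mob, norm_div, div_lt_one (lt_of_le_of_lt (norm_nonneg _) (mob_norm_lt hc hz))]
  exact mob_norm_lt hc hz

lemma mob_diffOn {c : ℂ} (hc : ‖c‖ < 1) :
    DifferentiableOn ℂ (mob c) (ball (0 : ℂ) 1) := by
  intro z hz
  rw [mem_ball_zero_iff] at hz
  exact (((differentiable_id.const_add c).differentiableAt).div
    (((differentiable_id.const_mul _).const_add 1).differentiableAt)
    (mob_denom_ne hc hz)).differentiableWithinAt

lemma mob_hasDerivAt {c z : ℂ} (hc : ‖c‖ < 1) (hz : ‖z‖ < 1) :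
    HasDerivAt (mob c) ((1 - c * (starRingEnd ℂ) c) / (1 + (starRingEnd ℂ) c * z) ^ 2) z := by
  have hd : 1 + (starRingEnd ℂ) c * z ≠ 0 := mob_denom_ne hc hz
  have h1 : HasDerivAt (fun w : ℂ => c + w) 1 z := (hasDerivAt_id z).const_add c
  have h2 : HasDerivAt (fun w : ℂ => 1 + (starRingEnd ℂ) c * w) ((starRingEnd ℂ) c) z := by
    simpa using ((hasDerivAt_id z).const_mul ((starRingEnd ℂ) c)).const_add 1
  have := h1.div h2 hd
  refine this.congr_deriv ?_
  field_simp
  ring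

lemma schwarzPick {ω : ℂ → ℂ} (hd : DifferentiableOn ℂ ω (ball (0:ℂ) 1))
    (hm : Set.MapsTo ω (ball (0:ℂ) 1) (ball (0:ℂ) 1)) {a : ℂ} (ha : a ∈ ball (0:ℂ) 1) :
    ‖deriv ω a‖ * (1 - ‖a‖ ^ 2) ≤ 1 - ‖ω a‖ ^ 2 := by
  rw [mem_ball_zero_iff] at ha
  set b := ω a with hb
  have hbn : ‖b‖ < 1 := mem_ball_zero_iff.1 (hm (mem_ball_zero_iff.2 ha))
  have hbn' : ‖-b‖ < 1 := by rwa [norm_neg]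
  -- F := mob (-b) ∘ ω ∘ mob a
  set F := (mob (-b)) ∘ ω ∘ (mob a) with hF
  have hFd : DifferentiableOn ℂ F (ball (0:ℂ) 1) :=
    ((mob_diffOn hbn').comp (hd.comp (mob_diffOn ha) (mob_mapsTo ha))
      (hm.comp (mob_mapsTo ha)))
  have hFm : Set.MapsTo F (ball (0:ℂ) 1) (ball (0:ℂ) 1) :=
    (mob_mapsTo hbn').comp (hm.comp (mob_mapsTo ha))
  have hmob0 : mob a 0 = a := by simp [mob]
  have hmobb : mob (-b) b = 0 := by simp [mob]
  have hF0 : F 0 = 0 := by simp [hF, Function.comp, hmob0, ← hb, hmobb]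
  -- derivative of F at 0
  have hωa : HasDerivAt ω (deriv ω a) a :=
    ((hd a (mem_ball_zero_iff.2 ha)).differentiableAt
      (isOpen_ball.mem_nhds (mem_ball_zero_iff.2 ha))).hasDerivAt
  have h1 : HasDerivAt (mob a) ((1 - a * (starRingEnd ℂ) a) / 1) 0 := by
    simpa using mob_hasDerivAt ha (by simp : ‖(0:ℂ)‖ < 1)
  have h2 : HasDerivAt (mob (-b))
      ((1 - (-b) * (starRingEnd ℂ) (-b)) / (1 + (starRingEnd ℂ) (-b) * b) ^ 2) b :=
    mob_hasDerivAt hbn' hbn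
  have hωa' : HasDerivAt ω (deriv ω a) (mob a 0) := by rw [hmob0]; exact hωa
  have hcomp1 : HasDerivAt (ω ∘ mob a) (deriv ω a * ((1 - a * (starRingEnd ℂ) a) / 1)) (0:ℂ) :=
    hωa'.comp (0:ℂ) h1
  have h2' : HasDerivAt (mob (-b))
      ((1 - (-b) * (starRingEnd ℂ) (-b)) / (1 + (starRingEnd ℂ) (-b) * b) ^ 2) ((ω ∘ mob a) 0) := by
    rwa [show (ω ∘ mob a) 0 = b by simp [Function.comp, hmob0, hb]]
  have hFD : HasDerivAt F
      ((1 - (-b) * (starRingEnd ℂ) (-b)) / (1 + (starRingEnd ℂ) (-b) * b) ^ 2 *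
        (deriv ω a * ((1 - a * (starRingEnd ℂ) a) / 1))) (0:ℂ) := h2'.comp (0:ℂ) hcomp1
  -- Schwarz at center
  have hs : ‖deriv F 0‖ ≤ 1 :=
    Complex.norm_deriv_le_one_of_mapsTo_ball hFd (by rw [hF0]; exact hFm.mono_right ball_subset_closedBall) one_pos
  rw [hFD.deriv] at hs
  -- now compute norms
  have hbc : b * (starRingEnd ℂ) b = ((‖b‖ ^ 2 : ℝ) : ℂ) := by
    rw [Complex.mul_conj]
    norm_cast
    rw [Complex.normSq_eq_norm_sq]
  have hac : a * (starRingEnd ℂ) a = ((‖a‖ ^ 2 : ℝ) : ℂ) := by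
    rw [Complex.mul_conj]
    norm_cast
    rw [Complex.normSq_eq_norm_sq]
  have hb1 : ((1:ℂ) - ((‖b‖ ^ 2 : ℝ) : ℂ)) ≠ 0 := by
    intro hh
    have h2 := congrArg Complex.re hh
    rw [Complex.sub_re, Complex.one_re, Complex.ofReal_re, Complex.zero_re] at h2
    nlinarith [hbn, norm_nonneg b]
  have simp1 : (1 - (-b) * (starRingEnd ℂ) (-b)) / (1 + (starRingEnd ℂ) (-b) * b) ^ 2
      = ((1:ℂ) - ((‖b‖ ^ 2 : ℝ) : ℂ))⁻¹ := by
    have k1 : (-b) * (starRingEnd ℂ) (-b) = ((‖b‖ ^ 2 : ℝ) : ℂ) := by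
      rw [map_neg]; linear_combination hbc
    have k2 : (1:ℂ) + (starRingEnd ℂ) (-b) * b = 1 - ((‖b‖ ^ 2 : ℝ) : ℂ) := by
      rw [map_neg]; linear_combination -hbc
    rw [k1, k2]
    set X : ℂ := 1 - ((‖b‖ ^ 2 : ℝ) : ℂ) with hX
    rw [pow_two]
    exact div_mul_cancel_left₀ hb1 X
  rw [simp1] at hs
  have hnorm : ‖((1:ℂ) - ((‖b‖ ^ 2 : ℝ) : ℂ))⁻¹ * (deriv ω a * ((1 - a * (starRingEnd ℂ) a) / 1))‖
      = (1 - ‖b‖ ^ 2)⁻¹ * (‖deriv ω a‖ * (1 - ‖a‖ ^ 2)) := by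
    rw [norm_mul, norm_mul, hac]
    have e1 : ‖((1:ℂ) - ((‖b‖ ^ 2 : ℝ) : ℂ))⁻¹‖ = (1 - ‖b‖ ^ 2)⁻¹ := by
      rw [norm_inv]
      congr 1
      rw [show (1:ℂ) - ((‖b‖ ^ 2 : ℝ) : ℂ) = (((1 - ‖b‖ ^ 2 : ℝ)) : ℂ) by push_cast; ring]
      rw [Complex.norm_real, Real.norm_eq_abs, _root_.abs_of_nonneg (by nlinarith [norm_nonneg b] : (0:ℝ) ≤ 1 - ‖b‖ ^ 2)]
    have e2 : ‖((1:ℂ) - ((‖a‖ ^ 2 : ℝ) : ℂ)) / 1‖ = 1 - ‖a‖ ^ 2 := by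
      rw [show ((1:ℂ) - ((‖a‖ ^ 2 : ℝ) : ℂ)) / 1 = (((1 - ‖a‖ ^ 2 : ℝ)) : ℂ) by push_cast; ring]
      rw [Complex.norm_real, Real.norm_eq_abs, _root_.abs_of_nonneg (by nlinarith [norm_nonneg a] : (0:ℝ) ≤ 1 - ‖a‖ ^ 2)]
    rw [e1, e2]
  rw [hnorm] at hs
  have hbpos : (0:ℝ) < 1 - ‖b‖ ^ 2 := by nlinarith [norm_nonneg b]
  rw [inv_mul_le_iff₀ hbpos] at hs
  simpa using hs

open Complex Metric

noncomputable def Ffun (β : ℝ) (t : ℝ) : ℝ :=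
  -Real.log (1 - t) + (β/2) * Real.log (-Real.log (1 - t^2))

lemma Ffun_hasDeriv {β t : ℝ} (h0 : 0 < t) (h1 : t < 1) :
    HasDerivAt (Ffun β) (1/(1-t) + (β/2) * ((2*t/(1-t^2)) / (-Real.log (1-t^2)))) t := by
  have h1t : (0:ℝ) < 1 - t := by linarith
  have ht2 : t^2 < 1 := by nlinarith
  have h1t2 : (0:ℝ) < 1 - t^2 := by linarith
  have hlt1 : 1 - t^2 < 1 := by nlinarith
  have hL : 0 < -Real.log (1 - t^2) := by
    have := Real.log_neg h1t2 hlt1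
    linarith
  -- first summand
  have d1 : HasDerivAt (fun t : ℝ => -Real.log (1 - t)) (1/(1-t)) t := by
    have inner : HasDerivAt (fun t : ℝ => 1 - t) (-1) t := by
      simpa using (hasDerivAt_id t).const_sub 1
    have := (Real.hasDerivAt_log h1t.ne').comp t inner
    have := this.neg
    refine this.congr_deriv ?_
    field_simp
  -- -log(1-t^2)
  have d2 : HasDerivAt (fun t : ℝ => -Real.log (1 - t^2)) (2*t/(1-t^2)) t := by
    have inner : HasDerivAt (fun t : ℝ => 1 - t^2) (-(2*t)) t := by
      simpa using ((hasDerivAt_pow 2 t).const_sub 1)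
    have := ((Real.hasDerivAt_log h1t2.ne').comp t inner).neg
    refine this.congr_deriv ?_
    field_simp
  have d3 : HasDerivAt (fun t : ℝ => Real.log (-Real.log (1 - t^2)))
      ((2*t/(1-t^2)) / (-Real.log (1-t^2))) t := by
    have := (Real.hasDerivAt_log hL.ne').comp t d2
    refine this.congr_deriv ?_
    field_simp
  exact d1.add (d3.const_mul (β/2))

noncomputable def Hfun (β : ℝ) (t : ℝ) : ℝ :=
  Real.exp ((β/2+1) * Real.log (-Real.log (1-t))) / (β/2+1)

lemma Hfun_hasDeriv {β t : ℝ} (hβ : β/2+1 ≠ 0) (h0 : 0 < t) (h1 : t < 1) :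
    HasDerivAt (Hfun β) ((1-t)⁻¹ * Real.exp ((β/2) * Real.log (-Real.log (1-t)))) t := by
  have h1t : (0:ℝ) < 1 - t := by linarith
  have hlt1 : 1 - t < 1 := by linarith
  have hG : 0 < -Real.log (1 - t) := by
    have := Real.log_neg h1t hlt1; linarith
  have d1 : HasDerivAt (fun t : ℝ => -Real.log (1 - t)) (1/(1-t)) t := by
    have inner : HasDerivAt (fun t : ℝ => 1 - t) (-1) t := by
      simpa using (hasDerivAt_id t).const_sub 1
    have := ((Real.hasDerivAt_log h1t.ne').comp t inner).neg
    refine this.congr_deriv ?_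
    field_simp
  have d2 : HasDerivAt (fun t : ℝ => Real.log (-Real.log (1-t)))
      ((1/(1-t)) / (-Real.log (1-t))) t := by
    have := (Real.hasDerivAt_log hG.ne').comp t d1
    refine this.congr_deriv ?_
    field_simp
  have d3 : HasDerivAt (fun t : ℝ => (β/2+1) * Real.log (-Real.log (1-t)))
      ((β/2+1) * ((1/(1-t)) / (-Real.log (1-t)))) t := d2.const_mul _
  have d4 := (d3.exp).div_const (β/2+1)
  refine d4.congr_deriv ?_
  have hEG : Real.exp ((β/2+1) * Real.log (-Real.log (1-t)))
      = Real.exp ((β/2) * Real.log (-Real.log (1-t))) * (-Real.log (1-t)) := by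
    rw [show (β/2+1) * Real.log (-Real.log (1-t))
        = (β/2) * Real.log (-Real.log (1-t)) + Real.log (-Real.log (1-t)) by ring,
      Real.exp_add, Real.exp_log hG]
  rw [hEG]
  generalize Real.exp ((β/2) * Real.log (-Real.log (1-t))) = E
  generalize hGg : -Real.log (1-t) = G at hG
  have key : (E * G) * ((β/2+1) * ((1/(1-t))/G)) / (β/2+1) = (E*G) * ((1/(1-t))/G) := by
    rw [show (E * G) * ((β/2+1) * ((1/(1-t))/G)) = (β/2+1) * ((E*G) * ((1/(1-t))/G)) by ring]
    exact mul_div_cancel_left₀ _ hβ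
  rw [key]
  field_simp [h1t.ne', hG.ne']


open Complex Metric

lemma log_norm_bound {v v' : ℝ → ℂ} {F F' A : ℝ → ℝ} {s r : ℝ} (hsr : s ≤ r)
    (hv : ∀ t ∈ Set.Icc s r, HasDerivAt v (v' t) t)
    (hvne : ∀ t ∈ Set.Icc s r, v t ≠ 0)
    (hF : ∀ t ∈ Set.Icc s r, HasDerivAt F (F' t) t)
    (hA : ∀ t ∈ Set.Icc s r, ‖v' t‖ ≤ A t * ‖v t‖)
    (hAF : ∀ t ∈ Set.Icc s r, A t ≤ F' t) :
    ‖v r‖ ≤ ‖v s‖ * Real.exp (F r - F s) := by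
  -- φ t = log ‖v t‖ - F t is antitone on [s, r]
  set φ : ℝ → ℝ := fun t => Real.log (Complex.normSq (v t)) / 2 - F t with hφ
  have hφd : ∀ t ∈ Set.Icc s r, HasDerivAt φ
      (((v t).re * (v' t).re + (v t).im * (v' t).im) / Complex.normSq (v t) - F' t) t := by
    intro t ht
    have hvt := hv t ht
    have hne := hvne t ht
    have hnsq : Complex.normSq (v t) ≠ 0 := by
      simpa [Complex.normSq_eq_zero] using hne
    have hre : HasDerivAt (fun t => (v t).re) (v' t).re t :=
      (Complex.reCLM.hasFDerivAt.comp_hasDerivAt t hvt)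
    have him : HasDerivAt (fun t => (v t).im) (v' t).im t :=
      (Complex.imCLM.hasFDerivAt.comp_hasDerivAt t hvt)
    have hnsqd : HasDerivAt (fun t => Complex.normSq (v t))
        (2 * ((v t).re * (v' t).re + (v t).im * (v' t).im)) t := by
      have : HasDerivAt (fun t => (v t).re * (v t).re + (v t).im * (v t).im)
          (((v' t).re * (v t).re + (v t).re * (v' t).re) +
           ((v' t).im * (v t).im + (v t).im * (v' t).im)) t := (hre.mul hre).add (him.mul him)
      have heq : (fun t => Complex.normSq (v t)) =
          (fun t => (v t).re * (v t).re + (v t).im * (v t).im) := by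
        funext x; simp [Complex.normSq_apply]
      rw [heq]
      convert this using 1
      ring
    have hlog : HasDerivAt (fun t => Real.log (Complex.normSq (v t)))
        ((Complex.normSq (v t))⁻¹ * (2 * ((v t).re * (v' t).re + (v t).im * (v' t).im))) t :=
      by have := Real.hasDerivAt_log hnsq; exact this.comp t hnsqd
    have := (hlog.div_const 2).sub (hF t ht)
    refine this.congr_deriv ?_
    field_simp
  have hmono : AntitoneOn φ (Set.Icc s r) := by
    apply antitoneOn_of_deriv_nonpos (convex_Icc s r)
    · exact fun t ht => ((hφd t ht).continuousAt).continuousWithinAt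
    · intro t ht
      rw [interior_Icc] at ht
      exact ((hφd t (Set.mem_Icc_of_Ioo ht)).differentiableAt).differentiableWithinAt
    · intro t ht
      rw [interior_Icc] at ht
      have ht' := Set.mem_Icc_of_Ioo ht
      rw [(hφd t ht').deriv]
      have hvpos : 0 < ‖v t‖ := norm_pos_iff.2 (hvne t ht')
      have hnsq : Complex.normSq (v t) = ‖v t‖ ^ 2 := by
        rw [Complex.normSq_eq_norm_sq]
      have hCS : (v t).re * (v' t).re + (v t).im * (v' t).im ≤ ‖v t‖ * ‖v' t‖ := by
        have h1 : (v t).re * (v' t).re + (v t).im * (v' t).im = ((v t) * (starRingEnd ℂ) (v' t)).re := by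
          simp [Complex.mul_re, Complex.conj_re, Complex.conj_im]
          try ring
        rw [h1]
        calc ((v t) * (starRingEnd ℂ) (v' t)).re ≤ ‖(v t) * (starRingEnd ℂ) (v' t)‖ :=
              Complex.re_le_norm _
        _ = ‖v t‖ * ‖v' t‖ := by rw [norm_mul, Complex.norm_conj]
      have hstep : ((v t).re * (v' t).re + (v t).im * (v' t).im) / Complex.normSq (v t) ≤ F' t := by
        rw [hnsq, div_le_iff₀ (by positivity : (0:ℝ) < ‖v t‖ ^ 2)]
        have h2 : ‖v t‖ * ‖v' t‖ ≤ ‖v t‖ * (A t * ‖v t‖) :=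
          mul_le_mul_of_nonneg_left (hA t ht') (norm_nonneg _)
        nlinarith [hCS, h2, hAF t ht', sq_nonneg ‖v t‖, hvpos]
      linarith
  have hend := hmono (Set.left_mem_Icc.2 hsr) (Set.right_mem_Icc.2 hsr) hsr
  -- φ r ≤ φ s
  have hlog_eq : ∀ t ∈ Set.Icc s r, Real.log (Complex.normSq (v t)) / 2 = Real.log ‖v t‖ := by
    intro t ht
    have : Complex.normSq (v t) = ‖v t‖ ^ 2 := by rw [Complex.normSq_eq_norm_sq]
    rw [this, Real.log_pow]
    push_cast; ring
  rw [hφ] at hend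
  simp only at hend
  rw [hlog_eq s (Set.left_mem_Icc.2 hsr), hlog_eq r (Set.right_mem_Icc.2 hsr)] at hend
  have hvr : 0 < ‖v r‖ := norm_pos_iff.2 (hvne r (Set.right_mem_Icc.2 hsr))
  have hvs : 0 < ‖v s‖ := norm_pos_iff.2 (hvne s (Set.left_mem_Icc.2 hsr))
  calc ‖v r‖ = Real.exp (Real.log ‖v r‖) := (Real.exp_log hvr).symm
  _ ≤ Real.exp (Real.log ‖v s‖ + (F r - F s)) := by
      apply Real.exp_le_exp.2; linarith
  _ = ‖v s‖ * Real.exp (F r - F s) := by rw [Real.exp_add, Real.exp_log hvs]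

set_option maxHeartbeats 1000000 in
theorem stmt17 (h g : ℂ → ℂ) (hf : SPH h g)
    (h1 : deriv h 0 = 1) (hg0 : deriv g 0 = 0)
    (β r₀ : ℝ) (hβ : β < -2) (hr₀ : 1 - 1 / (2 * Real.exp 1) < r₀) (hr₁ : r₀ < 1)
    (hP : ∀ z : ℂ, r₀ < ‖z‖ → ‖z‖ < 1 →
        ‖PH h g z‖ ≤ 1 / (1 - ‖z‖ ^ 2) +
          β / ((1 - ‖z‖ ^ 2) * Real.log (1 / (1 - ‖z‖ ^ 2)))) :
    ∃ M : ℝ, ∀ z ∈ Metric.ball (0 : ℂ) 1,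
      ‖h z‖ ≤ M ∧ ‖g z‖ ≤ M ∧ ‖h z + (starRingEnd ℂ) (g z)‖ ≤ M := by
  obtain ⟨hh, hg, hgz, hlt⟩ := hf
  have hO : IsOpen (ball (0:ℂ) 1) := isOpen_ball
  have hhA : AnalyticOnNhd ℂ h (ball 0 1) := hh.analyticOnNhd hO
  have hgA : AnalyticOnNhd ℂ g (ball 0 1) := hg.analyticOnNhd hO
  have hh'A : AnalyticOnNhd ℂ (deriv h) (ball 0 1) := hhA.deriv
  have hg'A : AnalyticOnNhd ℂ (deriv g) (ball 0 1) := hgA.deriv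
  have hh''A : AnalyticOnNhd ℂ (deriv (deriv h)) (ball 0 1) := hh'A.deriv
  have hne : ∀ z ∈ ball (0:ℂ) 1, deriv h z ≠ 0 := by
    intro z hz e
    have := hlt z hz
    rw [e, norm_zero] at this
    exact absurd this (norm_nonneg _).not_gt
  have hωd : DifferentiableOn ℂ (dil h g) (ball 0 1) := by
    intro z hz
    exact (((hg'A z hz).differentiableAt).div ((hh'A z hz).differentiableAt)
      (hne z hz)).differentiableWithinAt
  have hωm : Set.MapsTo (dil h g) (ball 0 1) (ball 0 1) := by
    intro z hz
    rw [mem_ball_zero_iff]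
    show ‖deriv g z / deriv h z‖ < 1
    rw [norm_div, div_lt_one (norm_pos_iff.2 (hne z hz))]
    exact hlt z hz
  have hω0 : dil h g 0 = 0 := by
    show deriv g 0 / deriv h 0 = 0
    rw [hg0, zero_div]
  have hSch : ∀ z ∈ ball (0:ℂ) 1, ‖dil h g z‖ ≤ ‖z‖ := fun z hz =>
    Complex.norm_le_norm_of_mapsTo_ball hωd (hωm.mono_right ball_subset_closedBall) hω0 (mem_ball_zero_iff.1 hz)
  have hSP : ∀ z ∈ ball (0:ℂ) 1, ‖deriv (dil h g) z‖ * (1 - ‖z‖^2) ≤ 1 - ‖dil h g z‖^2 :=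
    fun z hz => schwarzPick hωd hωm hz
  -- Key pointwise estimate
  have hKey : ∀ z : ℂ, r₀ < ‖z‖ → ‖z‖ < 1 →
      ‖deriv (deriv h) z‖ ≤
        (1/(1-‖z‖) + β / ((1-‖z‖^2) * (-Real.log (1-‖z‖^2)))) * ‖deriv h z‖ := by
    intro z hz1 hz2
    have hz : z ∈ ball (0:ℂ) 1 := mem_ball_zero_iff.2 hz2
    have hz0 : 0 < ‖z‖ := by
      have h2e : (0:ℝ) < 2 * Real.exp 1 := by positivity
      have : 1/(2*Real.exp 1) < 1 := by
        rw [div_lt_one h2e]; nlinarith [Real.exp_one_gt_d9]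
      linarith
    have h1t : (0:ℝ) < 1 - ‖z‖ := by linarith
    have hd2 : (0:ℝ) < 1 - ‖z‖^2 := by nlinarith
    have hω1 : ‖dil h g z‖ < 1 := mem_ball_zero_iff.1 (hωm hz)
    have hd1 : (0:ℝ) < 1 - ‖dil h g z‖^2 := by nlinarith [norm_nonneg (dil h g z)]
    have hdil : ‖(starRingEnd ℂ) (dil h g z) * deriv (dil h g) z / ((1 - ‖dil h g z‖ ^ 2 : ℝ) : ℂ)‖
        ≤ ‖z‖ / (1-‖z‖^2) := by
      rw [norm_div, norm_mul, RCLike.norm_conj]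
      have hden : ‖((1 - ‖dil h g z‖ ^ 2 : ℝ) : ℂ)‖ = 1 - ‖dil h g z‖^2 := by
        rw [Complex.norm_real, Real.norm_eq_abs, _root_.abs_of_nonneg hd1.le]
      rw [hden, div_le_div_iff₀ hd1 hd2]
      nlinarith [hSP z hz, hSch z hz, norm_nonneg (deriv (dil h g) z),
        norm_nonneg (dil h g z), hd1]
    have hpdb : ‖pd h z‖ ≤ 1/(1-‖z‖) + β / ((1-‖z‖^2) * (-Real.log (1-‖z‖^2))) := by
      have epd : pd h z = PH h g z
          + (starRingEnd ℂ) (dil h g z) * deriv (dil h g) z / ((1 - ‖dil h g z‖ ^ 2 : ℝ) : ℂ) := by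
        unfold PH; ring
      have hlogrw : Real.log (1 / (1 - ‖z‖ ^ 2)) = -Real.log (1-‖z‖^2) := by
        rw [one_div, Real.log_inv]
      have hfrac : 1/(1-‖z‖^2) + ‖z‖/(1-‖z‖^2) = 1/(1-‖z‖) := by
        have h1pt : (0:ℝ) < 1 + ‖z‖ := by linarith
        rw [← add_div, one_div,
          show (1:ℝ) - ‖z‖^2 = (1+‖z‖)*(1-‖z‖) by ring,
          div_mul_cancel_left₀ h1pt.ne']
      calc ‖pd h z‖ ≤ ‖PH h g z‖
            + ‖(starRingEnd ℂ) (dil h g z) * deriv (dil h g) z / ((1 - ‖dil h g z‖ ^ 2 : ℝ) : ℂ)‖ := by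
            rw [epd]; exact norm_add_le _ _
      _ ≤ (1 / (1 - ‖z‖ ^ 2) + β / ((1 - ‖z‖ ^ 2) * Real.log (1 / (1 - ‖z‖ ^ 2))))
            + ‖z‖ / (1-‖z‖^2) := add_le_add (hP z hz1 hz2) hdil
      _ = 1/(1-‖z‖) + β / ((1-‖z‖^2) * (-Real.log (1-‖z‖^2))) := by
            rw [hlogrw]; linarith [hfrac]
    have hmul : deriv (deriv h) z = pd h z * deriv h z := by
      unfold pd
      rw [div_mul_cancel₀ _ (hne z hz)]
    rw [hmul, norm_mul]
    exact mul_le_mul_of_nonneg_right hpdb (norm_nonneg _)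
  -- numeric facts
  have hepos := Real.exp_one_gt_d9
  have h2e : (0:ℝ) < 2*Real.exp 1 := by positivity
  have hr₀34 : (3:ℝ)/4 < r₀ := by
    have : 1/(2*Real.exp 1) < 1/4 := by
      rw [div_lt_div_iff₀ h2e (by norm_num)]
      nlinarith
    linarith
  set r₁ : ℝ := (r₀ + 1)/2 with hr₁def
  have hr₁a : r₀ < r₁ := by rw [hr₁def]; linarith
  have hr₁b : r₁ < 1 := by rw [hr₁def]; linarith
  have hr₁34 : (3:ℝ)/4 < r₁ := by linarith
  have hr₁pos : (0:ℝ) < r₁ := by linarith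
  -- compactness constants
  have hsub : closedBall (0:ℂ) r₁ ⊆ ball 0 1 := closedBall_subset_ball hr₁b
  obtain ⟨Ch, hCh⟩ := (isCompact_closedBall (0:ℂ) r₁).exists_bound_of_continuousOn
    (hh.continuousOn.mono hsub)
  obtain ⟨Cg, hCg⟩ := (isCompact_closedBall (0:ℂ) r₁).exists_bound_of_continuousOn
    (hg.continuousOn.mono hsub)
  obtain ⟨Cd, hCd⟩ := (isCompact_closedBall (0:ℂ) r₁).exists_bound_of_continuousOn
    (hh'A.continuousOn.mono hsub)
  have h0mem : (0:ℂ) ∈ closedBall (0:ℂ) r₁ := by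
    rw [mem_closedBall, dist_zero_right, norm_zero]; linarith
  have hCh0 : 0 ≤ Ch := (norm_nonneg _).trans (hCh 0 h0mem)
  have hCg0 : 0 ≤ Cg := (norm_nonneg _).trans (hCg 0 h0mem)
  have hCd0 : 0 ≤ Cd := (norm_nonneg _).trans (hCd 0 h0mem)
  -- constants
  have hγ : β/2 + 1 < 0 := by linarith
  set c₂ : ℝ := Real.exp (-(β/2) * Real.log 2) with hc₂def
  set CC : ℝ := Cd * Real.exp (- Ffun β r₁) * c₂ with hCCdef
  have hCC0 : 0 ≤ CC := by rw [hCCdef, hc₂def]; positivity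
  set I0 : ℝ := - Hfun β r₁ with hI0def
  have hHneg : ∀ t : ℝ, Hfun β t < 0 := fun t => div_neg_of_pos_of_neg (Real.exp_pos _) hγ
  have hI0 : 0 < I0 := by rw [hI0def]; linarith [hHneg r₁]
  set Cstar : ℝ := CC * I0 with hCstardef
  have hCstar0 : 0 ≤ Cstar := mul_nonneg hCC0 hI0.le
  -- the radial estimate
  have hrad : ∀ e : ℂ, ‖e‖ = 1 → ∀ r, r₁ ≤ r → r < 1 →
      ‖h ((r:ℂ)*e) - h ((r₁:ℂ)*e)‖ ≤ Cstar ∧ ‖g ((r:ℂ)*e) - g ((r₁:ℂ)*e)‖ ≤ Cstar := by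
    intro e he r hra hrb
    have hnorm_te : ∀ t : ℝ, 0 ≤ t → ‖(t:ℂ)*e‖ = t := by
      intro t ht
      rw [norm_mul, he, mul_one, Complex.norm_real, Real.norm_eq_abs, _root_.abs_of_nonneg ht]
    have hmem : ∀ t ∈ Set.Icc r₁ r, ((t:ℂ)*e) ∈ ball (0:ℂ) 1 := by
      intro t ht
      rw [mem_ball_zero_iff, hnorm_te t (by linarith [ht.1])]
      linarith [ht.2]
    have hmem' : ∀ t ∈ Set.Icc r₁ r, 3/4 < t ∧ t < 1 ∧ r₀ < t := by
      intro t ht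
      exact ⟨by linarith [ht.1], by linarith [ht.2], by linarith [ht.1]⟩
    -- radial derivative facts
    have hraddiff : ∀ (F : ℂ → ℂ), AnalyticOnNhd ℂ F (ball 0 1) →
        ∀ t ∈ Set.Icc r₁ r, HasDerivAt (fun s : ℝ => F ((s:ℂ)*e))
          (e * deriv F ((t:ℂ)*e)) t := by
      intro F hF t ht
      have hdF : HasDerivAt F (deriv F ((t:ℂ)*e)) ((t:ℂ)*e) :=
        ((hF _ (hmem t ht)).differentiableAt).hasDerivAt
      have hmul : HasDerivAt (fun w : ℂ => w*e) e (t:ℂ) := hasDerivAt_mul_const e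
      have hin : HasDerivAt (fun w : ℂ => F (w*e)) (deriv F ((t:ℂ)*e) * e) (t:ℂ) :=
        HasDerivAt.comp (t:ℂ) hdF hmul
      have := hin.comp_ofReal
      convert this using 1
      ring
    have hvd := hraddiff (deriv h) hh'A
    have hud := hraddiff h hhA
    have hgd := hraddiff g hgA
    have hvne : ∀ t ∈ Set.Icc r₁ r, deriv h ((t:ℂ)*e) ≠ 0 := fun t ht => hne _ (hmem t ht)
    -- exponential comparison
    have hvbound : ∀ t ∈ Set.Icc r₁ r,
        ‖deriv h ((t:ℂ)*e)‖ ≤ Cd * Real.exp (Ffun β t - Ffun β r₁) := by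
      intro t ht
      have hsub2 : Set.Icc r₁ t ⊆ Set.Icc r₁ r := Set.Icc_subset_Icc_right ht.2
      have hb1 : ‖deriv h ((r₁:ℂ)*e)‖ ≤ Cd := by
        apply hCd
        rw [mem_closedBall, dist_zero_right, hnorm_te r₁ hr₁pos.le]
      have hlnb := log_norm_bound (v := fun s : ℝ => deriv h ((s:ℂ)*e))
        (v' := fun s : ℝ => e * deriv (deriv h) ((s:ℂ)*e))
        (F := Ffun β)
        (F' := fun t => 1/(1-t) + (β/2) * ((2*t/(1-t^2)) / (-Real.log (1-t^2))))
        (A := fun t => 1/(1-t) + β / ((1-t^2) * (-Real.log (1-t^2))))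
        (s := r₁) (r := t) ht.1
        (fun s hs => hvd s (hsub2 hs))
        (fun s hs => hvne s (hsub2 hs))
        (fun s hs => by
          obtain ⟨hs34, hs1, hsr0⟩ := hmem' s (hsub2 hs)
          exact Ffun_hasDeriv (by linarith) hs1)
        (fun s hs => by
          obtain ⟨hs34, hs1, hsr0⟩ := hmem' s (hsub2 hs)
          have h0s : (0:ℝ) ≤ s := by linarith
          have := hKey ((s:ℂ)*e) (by rw [hnorm_te s h0s]; exact hsr0)
            (by rw [hnorm_te s h0s]; exact hs1)
          rw [hnorm_te s h0s] at this
          calc ‖e * deriv (deriv h) ((s:ℂ)*e)‖ = ‖deriv (deriv h) ((s:ℂ)*e)‖ := by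
                rw [norm_mul, he, one_mul]
          _ ≤ _ := this)
        (fun s hs => by
          obtain ⟨hs34, hs1, hsr0⟩ := hmem' s (hsub2 hs)
          have h1s2 : (0:ℝ) < 1 - s^2 := by nlinarith
          have hlt1 : 1 - s^2 < 1 := by nlinarith
          have hL : (0:ℝ) < -Real.log (1 - s^2) := by
            have := Real.log_neg h1s2 hlt1; linarith
          have hD : 0 < (1-s^2) * (-Real.log (1-s^2)) := mul_pos h1s2 hL
          have heq : (β/2) * ((2*s/(1-s^2)) / (-Real.log (1-s^2)))
              = (β*s) / ((1-s^2) * (-Real.log (1-s^2))) := by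
            rw [div_div]; ring
          have hba : β ≤ β*s := by nlinarith
          have hdivle : β / ((1-s^2) * (-Real.log (1-s^2)))
              ≤ (β*s) / ((1-s^2) * (-Real.log (1-s^2))) := by gcongr
          linarith [heq, hdivle])
      exact hlnb.trans (mul_le_mul_of_nonneg_right hb1 (Real.exp_pos _).le)
    -- pointwise bound by CC * K
    have hvK : ∀ t ∈ Set.Icc r₁ r, ‖deriv h ((t:ℂ)*e)‖
        ≤ CC * ((1-t)⁻¹ * Real.exp ((β/2) * Real.log (-Real.log (1-t)))) := by
      intro t ht
      obtain ⟨ht34, ht1, htr0⟩ := hmem' t ht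
      have h1t : (0:ℝ) < 1 - t := by linarith
      have h1t14 : 1 - t ≤ 1/4 := by linarith
      have hG : (0:ℝ) < -Real.log (1-t) := by
        have := Real.log_neg h1t (by linarith); linarith
      have h1t2 : (0:ℝ) < 1 - t^2 := by nlinarith
      have hL : (0:ℝ) < -Real.log (1-t^2) := by
        have := Real.log_neg h1t2 (by nlinarith); linarith
      -- G ≥ 2 log 2
      have hlog2 : (0:ℝ) < Real.log 2 := Real.log_pos (by norm_num)
      have hG2 : 2 * Real.log 2 ≤ -Real.log (1-t) := by
        have h14 : Real.log (1-t) ≤ Real.log (1/4) := Real.log_le_log h1t h1t14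
        have : Real.log (1/4) = -(2 * Real.log 2) := by
          rw [one_div, Real.log_inv, show (4:ℝ) = 2^2 by norm_num, Real.log_pow]
          push_cast; ring
        linarith [this ▸ h14]
      -- L ≥ G/2
      have hLG : (-Real.log (1-t))/2 ≤ -Real.log (1-t^2) := by
        have hsplit : Real.log (1-t^2) = Real.log (1-t) + Real.log (1+t) := by
          rw [show (1:ℝ) - t^2 = (1-t)*(1+t) by ring]
          exact Real.log_mul h1t.ne' (by linarith)
        have h1pt : Real.log (1+t) ≤ Real.log 2 := by
          apply Real.log_le_log (by linarith) (by linarith)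
        linarith
      -- log L ≥ log G - log 2
      have hlogLG : Real.log (-Real.log (1-t)) - Real.log 2 ≤ Real.log (-Real.log (1-t^2)) := by
        have : Real.log ((-Real.log (1-t))/2) ≤ Real.log (-Real.log (1-t^2)) :=
          Real.log_le_log (by positivity) hLG
        rwa [Real.log_div hG.ne' (by norm_num)] at this
      -- exp bound
      have hexpb : Real.exp ((β/2) * Real.log (-Real.log (1-t^2)))
          ≤ Real.exp ((β/2) * Real.log (-Real.log (1-t))) * c₂ := by
        rw [hc₂def, ← Real.exp_add]
        apply Real.exp_le_exp.2
        have hβ2 : β/2 ≤ 0 := by linarith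
        nlinarith [hlogLG]
      -- exp (Ffun β t) decomposition
      have hFdec : Real.exp (Ffun β t)
          = (1-t)⁻¹ * Real.exp ((β/2) * Real.log (-Real.log (1-t^2))) := by
        rw [Ffun, Real.exp_add, Real.exp_neg, Real.exp_log h1t]
      calc ‖deriv h ((t:ℂ)*e)‖ ≤ Cd * Real.exp (Ffun β t - Ffun β r₁) := hvbound t ht
      _ = Cd * Real.exp (- Ffun β r₁) * Real.exp (Ffun β t) := by
            rw [show Ffun β t - Ffun β r₁ = -Ffun β r₁ + Ffun β t by ring, Real.exp_add]
            ring
      _ = Cd * Real.exp (- Ffun β r₁) *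
            ((1-t)⁻¹ * Real.exp ((β/2) * Real.log (-Real.log (1-t^2)))) := by rw [hFdec]
      _ ≤ Cd * Real.exp (- Ffun β r₁) *
            ((1-t)⁻¹ * (Real.exp ((β/2) * Real.log (-Real.log (1-t))) * c₂)) := by
            apply mul_le_mul_of_nonneg_left _ (by positivity)
            exact mul_le_mul_of_nonneg_left hexpb (by positivity)
      _ = CC * ((1-t)⁻¹ * Real.exp ((β/2) * Real.log (-Real.log (1-t)))) := by
            rw [hCCdef]; ring
    -- continuity of K
    have hKcont : ContinuousOn (fun t : ℝ => (1-t)⁻¹ * Real.exp ((β/2) * Real.log (-Real.log (1-t))))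
        (Set.Icc r₁ r) := by
      have c0 : ContinuousOn (fun t : ℝ => 1 - t) (Set.Icc r₁ r) :=
        (continuous_const.sub continuous_id).continuousOn
      have hne1 : ∀ t ∈ Set.Icc r₁ r, (1:ℝ) - t ≠ 0 := by
        intro t ht; obtain ⟨_, ht1, _⟩ := hmem' t ht; intro hc; linarith
      have c1 : ContinuousOn (fun t : ℝ => (1-t)⁻¹) (Set.Icc r₁ r) := c0.inv₀ hne1
      have c2 : ContinuousOn (fun t : ℝ => -Real.log (1-t)) (Set.Icc r₁ r) :=
        (c0.log hne1).neg
      have hne2 : ∀ t ∈ Set.Icc r₁ r, -Real.log (1-t) ≠ 0 := by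
        intro t ht
        obtain ⟨ht34, ht1, _⟩ := hmem' t ht
        have h1t : (0:ℝ) < 1 - t := by linarith
        have := Real.log_neg h1t (by linarith)
        intro hc; linarith
      have c3 : ContinuousOn (fun t : ℝ => Real.log (-Real.log (1-t))) (Set.Icc r₁ r) :=
        c2.log hne2
      have c4 : ContinuousOn (fun t : ℝ => Real.exp ((β/2) * Real.log (-Real.log (1-t))))
          (Set.Icc r₁ r) :=
        Real.continuous_exp.comp_continuousOn (continuousOn_const.mul c3)
      exact c1.mul c4
    -- continuity of the radial derivative integrands
    have htecont : ContinuousOn (fun t : ℝ => (t:ℂ)*e) (Set.Icc r₁ r) :=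
      (Complex.continuous_ofReal.mul continuous_const).continuousOn
    have htemaps : Set.MapsTo (fun t : ℝ => (t:ℂ)*e) (Set.Icc r₁ r) (ball (0:ℂ) 1) :=
      fun t ht => hmem t ht
    have hvcont : ContinuousOn (fun t : ℝ => deriv h ((t:ℂ)*e)) (Set.Icc r₁ r) :=
      (hh'A.continuousOn.comp htecont htemaps)
    have hgcont : ContinuousOn (fun t : ℝ => deriv g ((t:ℂ)*e)) (Set.Icc r₁ r) :=
      (hg'A.continuousOn.comp htecont htemaps)
    -- integrability
    have hintv : IntervalIntegrable (fun t : ℝ => e * deriv h ((t:ℂ)*e)) MeasureTheory.volume r₁ r := by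
      apply ContinuousOn.intervalIntegrable
      rw [Set.uIcc_of_le hra]
      exact continuousOn_const.mul hvcont
    have hintg : IntervalIntegrable (fun t : ℝ => e * deriv g ((t:ℂ)*e)) MeasureTheory.volume r₁ r := by
      apply ContinuousOn.intervalIntegrable
      rw [Set.uIcc_of_le hra]
      exact continuousOn_const.mul hgcont
    have hintK : IntervalIntegrable
        (fun t : ℝ => CC * ((1-t)⁻¹ * Real.exp ((β/2) * Real.log (-Real.log (1-t)))))
        MeasureTheory.volume r₁ r := by
      apply ContinuousOn.intervalIntegrable
      rw [Set.uIcc_of_le hra]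
      exact continuousOn_const.mul hKcont
    -- value of ∫ K
    have hKval : (∫ t in r₁..r, CC * ((1-t)⁻¹ * Real.exp ((β/2) * Real.log (-Real.log (1-t)))))
        = CC * (Hfun β r - Hfun β r₁) := by
      rw [intervalIntegral.integral_const_mul]
      congr 1
      apply intervalIntegral.integral_eq_sub_of_hasDerivAt
      · intro t ht
        rw [Set.uIcc_of_le hra] at ht
        obtain ⟨ht34, ht1, _⟩ := hmem' t ht
        exact Hfun_hasDeriv hγ.ne (by linarith) ht1
      · apply ContinuousOn.intervalIntegrable
        rw [Set.uIcc_of_le hra]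
        exact hKcont
    have hIbound : CC * (Hfun β r - Hfun β r₁) ≤ Cstar := by
      rw [hCstardef, hI0def]
      apply mul_le_mul_of_nonneg_left _ hCC0
      linarith [hHneg r]
    -- bound on ∫ ‖deriv h (te)‖ style integrals
    have hnormv : ∀ t ∈ Set.Icc r₁ r, ‖e * deriv h ((t:ℂ)*e)‖
        ≤ CC * ((1-t)⁻¹ * Real.exp ((β/2) * Real.log (-Real.log (1-t)))) := by
      intro t ht
      rw [norm_mul, he, one_mul]
      exact hvK t ht
    have hnormg : ∀ t ∈ Set.Icc r₁ r, ‖e * deriv g ((t:ℂ)*e)‖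
        ≤ CC * ((1-t)⁻¹ * Real.exp ((β/2) * Real.log (-Real.log (1-t)))) := by
      intro t ht
      rw [norm_mul, he, one_mul]
      calc ‖deriv g ((t:ℂ)*e)‖ ≤ ‖deriv h ((t:ℂ)*e)‖ := (hlt _ (hmem t ht)).le
      _ ≤ _ := hvK t ht
    constructor
    · -- h part
      have hFTC : (∫ t in r₁..r, e * deriv h ((t:ℂ)*e)) = h ((r:ℂ)*e) - h ((r₁:ℂ)*e) := by
        apply intervalIntegral.integral_eq_sub_of_hasDerivAt
        · intro t ht
          rw [Set.uIcc_of_le hra] at ht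
          exact hud t ht
        · exact hintv
      rw [← hFTC]
      calc ‖∫ t in r₁..r, e * deriv h ((t:ℂ)*e)‖
          ≤ ∫ t in r₁..r, ‖e * deriv h ((t:ℂ)*e)‖ :=
            intervalIntegral.norm_integral_le_integral_norm hra
      _ ≤ ∫ t in r₁..r, CC * ((1-t)⁻¹ * Real.exp ((β/2) * Real.log (-Real.log (1-t)))) := by
            apply intervalIntegral.integral_mono_on hra _ hintK hnormv
            exact hintv.norm
      _ = CC * (Hfun β r - Hfun β r₁) := hKval
      _ ≤ Cstar := hIbound
    · -- g part
      have hFTC : (∫ t in r₁..r, e * deriv g ((t:ℂ)*e)) = g ((r:ℂ)*e) - g ((r₁:ℂ)*e) := by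
        apply intervalIntegral.integral_eq_sub_of_hasDerivAt
        · intro t ht
          rw [Set.uIcc_of_le hra] at ht
          exact hgd t ht
        · exact hintg
      rw [← hFTC]
      calc ‖∫ t in r₁..r, e * deriv g ((t:ℂ)*e)‖
          ≤ ∫ t in r₁..r, ‖e * deriv g ((t:ℂ)*e)‖ :=
            intervalIntegral.norm_integral_le_integral_norm hra
      _ ≤ ∫ t in r₁..r, CC * ((1-t)⁻¹ * Real.exp ((β/2) * Real.log (-Real.log (1-t)))) := by
            apply intervalIntegral.integral_mono_on hra _ hintK hnormg
            exact hintg.norm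
      _ = CC * (Hfun β r - Hfun β r₁) := hKval
      _ ≤ Cstar := hIbound
  -- final assembly
  refine ⟨(Ch + Cstar) + (Cg + Cstar), ?_⟩
  intro z hz
  have key : ‖h z‖ ≤ Ch + Cstar ∧ ‖g z‖ ≤ Cg + Cstar := by
    rcases le_or_gt ‖z‖ r₁ with hcase | hcase
    · have hzc : z ∈ closedBall (0:ℂ) r₁ := by
        rw [mem_closedBall, dist_zero_right]; exact hcase
      exact ⟨by linarith [hCh z hzc], by linarith [hCg z hzc]⟩
    · have hz1 : ‖z‖ < 1 := mem_ball_zero_iff.1 hz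
      have hz0 : z ≠ 0 := by
        intro hc; rw [hc, norm_zero] at hcase; linarith
      set ee : ℂ := (‖z‖:ℂ)⁻¹ * z with heedef
      have hnz : (‖z‖:ℂ) ≠ 0 := by
        simpa [Complex.ofReal_eq_zero] using (norm_pos_iff.2 hz0).ne'
      have hee : ‖ee‖ = 1 := by
        rw [heedef, norm_mul, norm_inv, Complex.norm_real, Real.norm_eq_abs,
          _root_.abs_of_nonneg (norm_nonneg z), inv_mul_cancel₀ (norm_pos_iff.2 hz0).ne']
      have hzee : ((‖z‖:ℝ):ℂ) * ee = z := by
        rw [heedef, ← mul_assoc, mul_inv_cancel₀ hnz, one_mul]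
      have hr₁ee : ((r₁:ℝ):ℂ) * ee ∈ closedBall (0:ℂ) r₁ := by
        rw [mem_closedBall, dist_zero_right, norm_mul, hee, mul_one, Complex.norm_real,
          Real.norm_eq_abs, _root_.abs_of_nonneg hr₁pos.le]
      obtain ⟨kh, kg⟩ := hrad ee hee ‖z‖ hcase.le hz1
      rw [hzee] at kh kg
      constructor
      · calc ‖h z‖ = ‖h ((r₁:ℂ)*ee) + (h z - h ((r₁:ℂ)*ee))‖ := by congr 1; ring
        _ ≤ ‖h ((r₁:ℂ)*ee)‖ + ‖h z - h ((r₁:ℂ)*ee)‖ := norm_add_le _ _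
        _ ≤ Ch + Cstar := add_le_add (hCh _ hr₁ee) kh
      · calc ‖g z‖ = ‖g ((r₁:ℂ)*ee) + (g z - g ((r₁:ℂ)*ee))‖ := by congr 1; ring
        _ ≤ ‖g ((r₁:ℂ)*ee)‖ + ‖g z - g ((r₁:ℂ)*ee)‖ := norm_add_le _ _
        _ ≤ Cg + Cstar := add_le_add (hCg _ hr₁ee) kg
  obtain ⟨k1, k2⟩ := key
  refine ⟨by linarith [hCg0, hCstar0], by linarith [hCh0, hCstar0], ?_⟩
  calc ‖h z + (starRingEnd ℂ) (g z)‖ ≤ ‖h z‖ + ‖(starRingEnd ℂ) (g z)‖ := norm_add_le _ _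
  _ = ‖h z‖ + ‖g z‖ := by rw [RCLike.norm_conj]
  _ ≤ (Ch + Cstar) + (Cg + Cstar) := add_le_add k1 k2
end
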